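/- arXiv:1909.02102 — 8 statements merged into one kernel-verified Lean document; each statement's English description precedes it below -/
import Mathlib

section
/- Under the listed hypotheses, the Lyapunov function ℰ(t) := e^{√β t} ( ½ ∫ (F(t,x) − √β T(t,x))² R(t,x)² dμ(x) + e(t) − e* ) is non-increasing in t on [0,∞); consequently, for all t ≥ 0, e(t) − e* ≤ e^{−√β t} ℰ(0). That is, the Fisher–Rao accelerated information gradient flow with damping α = 2√β of a β-strongly geodesically convex energy converges at rate O(e^{−√β t}). -/
open MeasureTheory

private lemma l2mul_aux {Ω : Type*} [MeasurableSpace Ω] {μ : Measure Ω} {f g : Ω → ℝ}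
    (hf : MeasureTheory.MemLp f 2 μ) (hg : MeasureTheory.MemLp g 2 μ) :
    MeasureTheory.Integrable (fun x => f x * g x) μ := by
  have h := (hf.add hg).integrable_sq
  have hf2 := hf.integrable_sq
  have hg2 := hg.integrable_sq
  have he : (fun x => f x * g x) = fun x => ((f x + g x)^2 - f x^2 - g x^2)/2 := by
    funext x; ring
  rw [he]; exact ((h.sub hf2).sub hg2).div_const 2


private lemma aig_pointwise_aux (σ Hc sH cT b m' mt Φx Ψx Rx Rs : ℝ)
    (hR : Rx ≠ 0) (hs : sH ≠ 0) (hH : Hc ≠ 0) :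
    σ * (2 * Hc / sH * cT - 4) *
        ((Φx - mt - σ * (2 * Hc / sH * (Rs - Rx * cT) / Rx)) * (Φx - mt) * Rx ^ 2) +
      σ * b * (sH - Hc * cT) / (2 * Hc ^ 2 * sH) *
        ((Φx - mt - σ * (2 * Hc / sH * (Rs - Rx * cT) / Rx)) *
          (2 * Hc / sH * (Rs - Rx * cT) / Rx) * Rx ^ 2) -
      2 * (Ψx * ((Φx - mt - σ * (2 * Hc / sH * (Rs - Rx * cT) / Rx)) * Rx ^ 2)) +
      2 * (-(2 * σ * mt) + mt ^ 2 / 2 - m' + σ * b / 2) *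
        ((Φx - mt - σ * (2 * Hc / sH * (Rs - Rx * cT) / Rx)) * Rx ^ 2)
    = ((2:ℕ) : ℝ) * (Φx - mt - σ * (2 * Hc / sH * (Rs - Rx * cT) / Rx)) ^ (2 - 1) *
          (-(2 * σ * Φx + 1 / 2 * Φx ^ 2 - mt * Φx + Ψx) - m' -
            σ *
              ((((2 * (-(1 / sH) * (b * sH / (4 * Hc))) * sH -
                            2 * Hc * (cT * (-(1 / sH) * (b * sH / (4 * Hc))))) /
                          sH ^ 2 *
                        (Rs - Rx * cT) +
                      2 * Hc / sH *
                        -(1 / 2 * (Φx - mt) * Rx * cT + Rx * (b * sH / (4 * Hc)))) *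
                    Rx -
                  2 * Hc / sH * (Rs - Rx * cT) * (1 / 2 * (Φx - mt) * Rx)) /
                Rx ^ 2)) *
        Rx ^ 2 +
      (Φx - mt - σ * (2 * Hc / sH * (Rs - Rx * cT) / Rx)) ^ 2 *
        (((2:ℕ) : ℝ) * Rx ^ (2 - 1) * (1 / 2 * (Φx - mt) * Rx)) := by
  simp only [Nat.cast_ofNat, Nat.add_one_sub_one, pow_one]
  field_simp
  ring

set_option maxHeartbeats 4000000 in
/-- Convergence of the Fisher–Rao accelerated information gradient flow with damping
`α = 2√β` for a `β`-strongly (geodesically) convex energy: the Lyapunov function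
`ℰ(t) = e^{√β t}(½∫(F − √βT)²R² dμ + e(t) − e*)` is non-increasing on `[0,∞)`, and
consequently `e(t) − e* ≤ e^{−√β t} ℰ(0)` for all `t ≥ 0`, i.e. an `O(e^{−√β t})`
convergence rate. -/
theorem fisher_rao_aig_strongly_convex_convergence
    {Ω : Type*} [MeasurableSpace Ω] (μ : Measure Ω)
    (β : ℝ) (hβ : 0 < β)
    (R Φ Ψ : ℝ → Ω → ℝ) (Rstar : Ω → ℝ) (e : ℝ → ℝ) (estar : ℝ)
    (c m H : ℝ → ℝ) (F T : ℝ → Ω → ℝ) (Ly : ℝ → ℝ)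
    -- definitions
    (hc : ∀ t, c t = ∫ x, R t x * Rstar x ∂μ)
    (hm : ∀ t, m t = ∫ x, Φ t x * (R t x)^2 ∂μ)
    (hF : ∀ t x, F t x = Φ t x - m t)
    (hH : ∀ t, H t = Real.arccos (c t))
    (hT : ∀ t x, T t x = (2 * H t / Real.sin (H t)) * (Rstar x - R t x * c t) / R t x)
    (hLy : ∀ t, Ly t = Real.exp (Real.sqrt β * t) *
      ((1/2) * (∫ x, (F t x - Real.sqrt β * T t x)^2 * (R t x)^2 ∂μ) + (e t - estar)))
    -- positivity and normalization
    (hRpos : ∀ t, 0 ≤ t → ∀ x, 0 < R t x)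
    (hRnorm : ∀ t, 0 ≤ t → ∫ x, (R t x)^2 ∂μ = 1)
    (hRstarnorm : ∫ x, (Rstar x)^2 ∂μ = 1)
    (hcIoo : ∀ t, 0 ≤ t → c t ∈ Set.Ioo (0:ℝ) 1)
    -- the Fisher–Rao AIG flow with damping 2√β in square-root coordinates
    (hflowR : ∀ t, 0 ≤ t → ∀ x,
      HasDerivAt (fun s => R s x) ((1/2) * F t x * R t x) t)
    (hflowΦ : ∀ t, 0 ≤ t → ∀ x,
      HasDerivAt (fun s => Φ s x)
        (-(2 * Real.sqrt β * Φ t x + (1/2) * (Φ t x)^2 - m t * Φ t x + Ψ t x)) t)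
    -- chain rule for the energy: e'(t) = ∫ Ψ ∂ₜ(R²) dμ, with ∂ₜ(R²) = F R²
    (he' : ∀ t, 0 ≤ t → HasDerivAt e (∫ x, Ψ t x * (F t x * (R t x)^2) ∂μ) t)
    -- derivative of c by differentiating under the integral sign
    (hc' : ∀ t, 0 ≤ t →
      HasDerivAt c (∫ x, ((1/2) * F t x * R t x) * Rstar x ∂μ) t)
    -- kinetic term: differentiation under the integral sign
    (hKdiff : ∀ t, 0 ≤ t → ∀ x, DifferentiableAt ℝ
      (fun s => (F s x - Real.sqrt β * T s x)^2 * (R s x)^2) t)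
    (hK' : ∀ t, 0 ≤ t →
      HasDerivAt (fun s => ∫ x, (F s x - Real.sqrt β * T s x)^2 * (R s x)^2 ∂μ)
        (∫ x, deriv (fun s => (F s x - Real.sqrt β * T s x)^2 * (R s x)^2) t ∂μ) t)
    -- L² memberships
    (hL2F : ∀ t, 0 ≤ t → MemLp (fun x => F t x * R t x) 2 μ)
    (hL2T : ∀ t, 0 ≤ t → MemLp (fun x => (Rstar x / R t x - c t) * R t x) 2 μ)
    -- β-strong geodesic convexity of the energy under the Fisher–Rao metric
    (hconv : ∀ t, 0 ≤ t → estar ≥ e t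
      + (∫ x, (Ψ t x - ∫ y, Ψ t y * (R t y)^2 ∂μ) * T t x * (R t x)^2 ∂μ)
      + (β/2) * ∫ x, (T t x)^2 * (R t x)^2 ∂μ)
    -- integrability of the integrals appearing
    (hint1 : ∀ t, 0 ≤ t →
      Integrable (fun x => (F t x - Real.sqrt β * T t x)^2 * (R t x)^2) μ)
    (hint2 : ∀ t, 0 ≤ t → Integrable (fun x => Ψ t x * T t x * (R t x)^2) μ)
    (hint3 : ∀ t, 0 ≤ t → Integrable (fun x => Ψ t x * F t x * (R t x)^2) μ)
    (hint4 : ∀ t, 0 ≤ t → Integrable (fun x => (T t x)^2 * (R t x)^2) μ)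
    (hint5 : ∀ t, 0 ≤ t → Integrable
      (fun x => deriv (fun s => (F s x - Real.sqrt β * T s x)^2 * (R s x)^2) t) μ) :
    AntitoneOn Ly (Set.Ici 0) ∧
    ∀ t, 0 ≤ t → e t - estar ≤ Real.exp (-(Real.sqrt β * t)) * Ly 0 := by
  classical
  set σ := Real.sqrt β with hσdef
  have hσpos : 0 < σ := Real.sqrt_pos.2 hβ
  set K : ℝ → ℝ := fun s => ∫ x, (F s x - σ * T s x)^2 * (R s x)^2 ∂μ with hKdef
  have key : ∀ t, 0 ≤ t →
      HasDerivAt Ly (Real.exp (σ*t) * (σ * ((1/2) * K t + (e t - estar)) +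
        ((1/2) * (∫ x, deriv (fun s => (F s x - σ*T s x)^2*(R s x)^2) t ∂μ) +
          ∫ x, Ψ t x * (F t x * (R t x)^2) ∂μ))) t
      ∧ σ * ((1/2) * K t + (e t - estar)) +
        ((1/2) * (∫ x, deriv (fun s => (F s x - σ*T s x)^2*(R s x)^2) t ∂μ) +
          ∫ x, Ψ t x * (F t x * (R t x)^2) ∂μ) ≤ 0 := by
    intro t ht
    obtain ⟨hc0, hc1⟩ := hcIoo t ht
    have hHeq : H t = Real.arccos (c t) := hH t
    have hH0 : 0 < H t := by rw [hHeq]; exact Real.arccos_pos.2 hc1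
    have hHpi2 : H t < Real.pi / 2 := by rw [hHeq]; exact Real.arccos_lt_pi_div_two.2 hc0
    have hsinpos : 0 < Real.sin (H t) :=
      Real.sin_pos_of_pos_of_lt_pi hH0 (by linarith [Real.pi_pos])
    have hcosH : Real.cos (H t) = c t := by
      rw [hHeq, Real.cos_arccos (by linarith) (by linarith)]
    have hsin_eq : Real.sin (H t) = Real.sqrt (1 - c t ^ 2) := by
      rw [hHeq, Real.sin_arccos]
    have hsinsq : Real.sin (H t)^2 = 1 - c t^2 := by
      rw [hsin_eq]; exact Real.sq_sqrt (by nlinarith)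
    have hRt : ∀ x, 0 < R t x := hRpos t ht
    have htanpos : 0 < Real.sin (H t) - H t * c t := by
      have h3 := Real.lt_tan hH0 hHpi2
      have hcpos : 0 < Real.cos (H t) := by rw [hcosH]; exact hc0
      rw [Real.tan_eq_sin_div_cos] at h3
      have := (lt_div_iff₀ hcpos).1 h3
      rw [hcosH] at this
      linarith
    have hβσ : β = σ^2 := (Real.sq_sqrt hβ.le).symm
    -- basic integrability
    have hR2int : Integrable (fun x => (R t x)^2) μ := by
      by_contra hcon
      have h := hRnorm t ht
      rw [integral_undef hcon] at h; norm_num at h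
    have hRstar2int : Integrable (fun x => (Rstar x)^2) μ := by
      by_contra hcon
      rw [integral_undef hcon] at hRstarnorm; norm_num at hRstarnorm
    have hRL2 : MemLp (fun x => R t x) 2 μ := by
      have hasm : AEStronglyMeasurable (fun x => (R t x)^2) μ := hR2int.aestronglyMeasurable
      have hasm2 : AEStronglyMeasurable (fun x => R t x) μ := by
        have h2 := Real.continuous_sqrt.comp_aestronglyMeasurable hasm
        refine h2.congr (Filter.Eventually.of_forall fun x => ?_)
        simp only [Function.comp]
        exact Real.sqrt_sq (hRt x).le
      exact (memLp_two_iff_integrable_sq hasm2).2 hR2int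
    have hFRL2 : MemLp (fun x => F t x * R t x) 2 μ := hL2F t ht
    have hTReq : ∀ x, T t x * R t x = (2*H t/Real.sin (H t)) * (Rstar x - R t x * c t) := by
      intro x
      rw [hT t x]
      field_simp [(hRt x).ne', hsinpos.ne']
    have hTRL2 : MemLp (fun x => T t x * R t x) 2 μ := by
      have heq : (fun x => T t x * R t x)
          = fun x => (2*H t/Real.sin (H t)) * ((Rstar x / R t x - c t) * R t x) := by
        funext x
        rw [hTReq x]
        field_simp [(hRt x).ne']
      rw [heq]
      exact (hL2T t ht).const_mul _
    have hRstarL2 : MemLp Rstar 2 μ := by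
      have heq : Rstar = fun x => (Rstar x / R t x - c t) * R t x + c t * R t x := by
        funext x
        field_simp [(hRt x).ne']
        ring
      rw [heq]
      exact (hL2T t ht).add (hRL2.const_mul _)
    -- integrable products
    have iFF : Integrable (fun x => (F t x)^2 * (R t x)^2) μ := by
      have h := l2mul_aux hFRL2 hFRL2
      have heq : (fun x => (F t x)^2 * (R t x)^2)
          = fun x => (F t x * R t x) * (F t x * R t x) := funext fun x => by ring
      rw [heq]; exact h
    have iFT : Integrable (fun x => F t x * T t x * (R t x)^2) μ := by
      have h := l2mul_aux hFRL2 hTRL2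
      have heq : (fun x => F t x * T t x * (R t x)^2)
          = fun x => (F t x * R t x) * (T t x * R t x) := funext fun x => by ring
      rw [heq]; exact h
    have iTT : Integrable (fun x => (T t x)^2 * (R t x)^2) μ := hint4 t ht
    have iFR2 : Integrable (fun x => F t x * (R t x)^2) μ := by
      have h := l2mul_aux hFRL2 hRL2
      have heq : (fun x => F t x * (R t x)^2)
          = fun x => (F t x * R t x) * (R t x) := funext fun x => by ring
      rw [heq]; exact h
    have iTR2 : Integrable (fun x => T t x * (R t x)^2) μ := by
      have h := l2mul_aux hTRL2 hRL2
      have heq : (fun x => T t x * (R t x)^2)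
          = fun x => (T t x * R t x) * (R t x) := funext fun x => by ring
      rw [heq]; exact h
    have iRRstar : Integrable (fun x => R t x * Rstar x) μ := l2mul_aux hRL2 hRstarL2
    have iΨT : Integrable (fun x => Ψ t x * T t x * (R t x)^2) μ := hint2 t ht
    have iΨF : Integrable (fun x => Ψ t x * F t x * (R t x)^2) μ := hint3 t ht
    -- key integral values
    have hIRRstar : ∫ x, R t x * Rstar x ∂μ = c t := (hc t).symm
    have hIFR2 : ∫ x, F t x * (R t x)^2 ∂μ = 0 := by
      have iΦR2 : Integrable (fun x => Φ t x * (R t x)^2) μ := by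
        have heq : (fun x => Φ t x * (R t x)^2)
            = fun x => F t x * (R t x)^2 + m t * (R t x)^2 := funext fun x => by
          rw [hF t x]; ring
        rw [heq]; exact iFR2.add (hR2int.const_mul _)
      have heq : (fun x => F t x * (R t x)^2)
          = fun x => Φ t x * (R t x)^2 - m t * (R t x)^2 := funext fun x => by
        rw [hF t x]; ring
      rw [heq, integral_sub iΦR2 (hR2int.const_mul _), integral_const_mul,
        hRnorm t ht, ← hm t]
      ring
    have hITR2 : ∫ x, T t x * (R t x)^2 ∂μ = 0 := by
      have heq : (fun x => T t x * (R t x)^2)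
          = fun x => (2*H t/Real.sin (H t)) * (R t x * Rstar x)
            - (2*H t/Real.sin (H t) * c t) * (R t x)^2 := funext fun x => by
        have h1 : T t x * (R t x)^2 = (T t x * R t x) * R t x := by ring
        rw [h1, hTReq x]; ring
      rw [heq, integral_sub (iRRstar.const_mul _) (hR2int.const_mul _),
        integral_const_mul, integral_const_mul, hIRRstar, hRnorm t ht]
      ring
    -- named integrals
    set a : ℝ := ∫ x, (F t x)^2 * (R t x)^2 ∂μ with hadef
    set b : ℝ := ∫ x, F t x * T t x * (R t x)^2 ∂μ with hbdef
    set d : ℝ := ∫ x, (T t x)^2 * (R t x)^2 ∂μ with hddef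
    set q : ℝ := ∫ x, Ψ t x * T t x * (R t x)^2 ∂μ with hqdef
    have ha0 : 0 ≤ a := integral_nonneg fun x => by positivity
    have hd4 : d = 4 * (H t)^2 := by
      have heq : (fun x => (T t x)^2*(R t x)^2) = fun x =>
          (2*H t/Real.sin (H t))^2 * (Rstar x)^2
          - (2*(2*H t/Real.sin (H t))^2*c t) * (R t x * Rstar x)
          + ((2*H t/Real.sin (H t))^2*(c t)^2) * (R t x)^2 := by
        funext x
        have h1 : (T t x)^2*(R t x)^2 = (T t x*R t x)^2 := by ring
        rw [h1, hTReq x]; ring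
      have hstep : d = (2*H t/Real.sin (H t))^2*1
          - (2*(2*H t/Real.sin (H t))^2*c t)*(c t)
          + ((2*H t/Real.sin (H t))^2*(c t)^2)*1 := by
        have iA : Integrable (fun x => (2*H t/Real.sin (H t))^2 * (Rstar x)^2
            - (2*(2*H t/Real.sin (H t))^2*c t) * (R t x * Rstar x)) μ :=
          (hRstar2int.const_mul _).sub (iRRstar.const_mul _)
        rw [hddef, heq, integral_add iA (hR2int.const_mul _),
          integral_sub (hRstar2int.const_mul _) (iRRstar.const_mul _),
          integral_const_mul, integral_const_mul, integral_const_mul,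
          hRstarnorm, hIRRstar, hRnorm t ht]
      rw [hstep]
      have h2 : (2*H t/Real.sin (H t))^2 * (1 - c t^2) = 4*(H t)^2 := by
        rw [← hsinsq]; field_simp; ring
      linear_combination h2
    have hd0 : 0 < d := by rw [hd4]; positivity
    have hqbound : q ≤ estar - e t - σ^2/2 * d := by
      have h := hconv t ht
      have heqq : ∫ x, (Ψ t x - ∫ y, Ψ t y * (R t y)^2 ∂μ) * T t x * (R t x)^2 ∂μ = q := by
        have heq2 : (fun x => (Ψ t x - ∫ y, Ψ t y * (R t y)^2 ∂μ) * T t x * (R t x)^2)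
            = fun x => Ψ t x * T t x * (R t x)^2
              - (∫ y, Ψ t y * (R t y)^2 ∂μ) * (T t x * (R t x)^2) := by
          funext x; ring
        rw [heq2, integral_sub iΨT (iTR2.const_mul _), integral_const_mul, hITR2]
        simp
        rfl
      rw [heqq, hβσ] at h
      linarith
    have hCS : b^2 ≤ a*d := by
      have h0 : 0 ≤ ∫ x, (F t x*R t x - (b/d)*(T t x*R t x))^2 ∂μ :=
        integral_nonneg fun x => by positivity
      have hexp : ∫ x, (F t x*R t x - (b/d)*(T t x*R t x))^2 ∂μ
          = a - (2*(b/d))*b + (b/d)^2*d := by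
        have heq : (fun x => (F t x*R t x - (b/d)*(T t x*R t x))^2)
            = fun x => (F t x)^2*(R t x)^2 - (2*(b/d))*(F t x*T t x*(R t x)^2)
              + (b/d)^2*((T t x)^2*(R t x)^2) := by
          funext x; ring
        have iB : Integrable (fun x => (F t x)^2*(R t x)^2
            - (2*(b/d))*(F t x*T t x*(R t x)^2)) μ := iFF.sub (iFT.const_mul _)
        rw [heq, integral_add iB (iTT.const_mul _),
          integral_sub iFF (iFT.const_mul _), integral_const_mul, integral_const_mul]
      rw [hexp] at h0
      have key2 : (a - (2*(b/d))*b + (b/d)^2*d)*d = (a*d - b^2)*1 := by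
        field_simp
        ring
      have h3 := mul_nonneg h0 hd0.le
      rw [key2] at h3
      linarith
    have if4 : Integrable (fun x => (F t x - σ*T t x)*(R t x)^2) μ := by
      have heq : (fun x => (F t x - σ*T t x)*(R t x)^2)
          = fun x => F t x*(R t x)^2 - σ*(T t x*(R t x)^2) := funext fun x => by ring
      rw [heq]; exact iFR2.sub (iTR2.const_mul _)
    have hI4 : ∫ x, (F t x - σ*T t x)*(R t x)^2 ∂μ = 0 := by
      have heq : (fun x => (F t x - σ*T t x)*(R t x)^2)
          = fun x => F t x*(R t x)^2 - σ*(T t x*(R t x)^2) := funext fun x => by ring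
      rw [heq, integral_sub iFR2 (iTR2.const_mul _), integral_const_mul, hIFR2, hITR2]
      ring
    have hc'd : HasDerivAt c (b*Real.sin (H t)/(4*H t)) t := by
      have h := hc' t ht
      have hval : ∫ x, (1/2*F t x*R t x)*Rstar x ∂μ = b*Real.sin (H t)/(4*H t) := by
        have heq : (fun x => (1/2*F t x*R t x)*Rstar x)
            = fun x => (Real.sin (H t)/(4*H t))*(F t x*T t x*(R t x)^2)
              + (c t/2)*(F t x*(R t x)^2) := by
          funext x
          have h1 : (Real.sin (H t)/(4*H t))*(F t x*T t x*(R t x)^2)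
              = (Real.sin (H t)/(4*H t))*((F t x*R t x)*(T t x*R t x)) := by ring
          rw [h1, hTReq x]
          field_simp
          ring
        rw [heq, integral_add (iFT.const_mul _) (iFR2.const_mul _),
          integral_const_mul, integral_const_mul, hIFR2]
        ring
      exact hval ▸ h
    refine ⟨?_, ?_⟩
    · have hLf : Ly = fun s => Real.exp (σ*s)*((1/2)*K s + (e s - estar)) :=
        funext fun s => hLy s
      rw [hLf]
      have hexp : HasDerivAt (fun s : ℝ => Real.exp (σ*s)) (Real.exp (σ*t)*(σ*1)) t :=
        ((hasDerivAt_id t).const_mul σ).exp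
      have hcomb := hexp.mul (((hK' t ht).const_mul (1/2:ℝ)).add ((he' t ht).sub_const estar))
      convert hcomb using 1
      · rfl
      · rfl
      · rfl
      · simp only [Pi.add_apply]
        ring
    · by_cases hdeg : ∀ x, F t x - σ*T t x = 0
      · have hKt0 : K t = 0 := by
          have heq : (fun x => (F t x - σ*T t x)^2*(R t x)^2) = fun _ => (0:ℝ) :=
            funext fun x => by rw [hdeg x]; ring
          show (∫ x, (F t x - σ*T t x)^2*(R t x)^2 ∂μ) = 0
          rw [heq, integral_zero]
        have hder0 : ∀ x, deriv (fun s => (F s x - σ*T s x)^2*(R s x)^2) t = 0 := by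
          intro x
          have hmin : IsLocalMin (fun s => (F s x - σ*T s x)^2*(R s x)^2) t := by
            refine Filter.Eventually.of_forall fun s => ?_
            have h1 : (F t x - σ*T t x)^2*(R t x)^2 = 0 := by rw [hdeg x]; ring
            show (F t x - σ*T t x)^2*(R t x)^2 ≤ _
            rw [h1]; positivity
          exact hmin.deriv_eq_zero
        have hint0 : ∫ x, deriv (fun s => (F s x - σ*T s x)^2*(R s x)^2) t ∂μ = 0 := by
          simp only [hder0]
          exact integral_zero _ _
        have hepval : ∫ x, Ψ t x * (F t x * (R t x)^2) ∂μ = σ*q := by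
          have heq : (fun x => Ψ t x * (F t x * (R t x)^2))
              = fun x => σ*(Ψ t x*T t x*(R t x)^2) := by
            funext x
            have hFx : F t x = σ*T t x := by have := hdeg x; linarith
            rw [hFx]; ring
          rw [heq, integral_const_mul]
        rw [hKt0, hint0, hepval]
        have h1 : σ*q ≤ σ*(estar - e t - σ^2/2*d) := mul_le_mul_of_nonneg_left hqbound hσpos.le
        have h2 : 0 ≤ σ*(σ^2/2*d) := mul_nonneg hσpos.le (mul_nonneg (by positivity) hd0.le)
        nlinarith [h1, h2]
      · push_neg at hdeg
        obtain ⟨x₀, hx₀⟩ := hdeg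
        have hRd : ∀ x, HasDerivAt (fun s => R s x) (1/2*F t x*R t x) t := hflowR t ht
        have hφd : ∀ x, HasDerivAt (fun s => Φ s x)
            (-(2*σ*Φ t x + 1/2*(Φ t x)^2 - m t*Φ t x + Ψ t x)) t := hflowΦ t ht
        have hne1 : c t ≠ -1 := by linarith
        have hne2 : c t ≠ 1 := ne_of_lt hc1
        have harc : HasDerivAt (fun s => Real.arccos (c s))
            (-(1/Real.sqrt (1 - c t^2)) * (b*Real.sin (H t)/(4*H t))) t :=
          (Real.hasDerivAt_arccos hne1 hne2).comp t hc'd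
        have hsinne : Real.sin (Real.arccos (c t)) ≠ 0 := by
          rw [← hHeq]; exact hsinpos.ne'
        have hgamd := (harc.const_mul (2:ℝ)).div harc.sin hsinne
        have hud : ∀ x, HasDerivAt (fun s => Rstar x - R s x * c s)
            (-((1/2*F t x*R t x)*(c t) + R t x*(b*Real.sin (H t)/(4*H t)))) t :=
          fun x => ((hRd x).mul hc'd).const_sub (Rstar x)
        have hTq := fun x => (hgamd.mul (hud x)).div (hRd x) (hRt x).ne'
        have hpair : ∃ y, Φ t x₀ - σ*T t x₀ ≠ Φ t y - σ*T t y := by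
          by_contra hcon
          push_neg at hcon
          have hallk : ∀ x, F t x - σ*T t x = F t x₀ - σ*T t x₀ := by
            intro x
            rw [hF t x, hF t x₀]
            have := hcon x
            linarith
          have h0 : ∫ x, (F t x - σ*T t x)*(R t x)^2 ∂μ = F t x₀ - σ*T t x₀ := by
            have heq : (fun x => (F t x - σ*T t x)*(R t x)^2)
                = fun x => (F t x₀ - σ*T t x₀)*(R t x)^2 := funext fun x => by rw [hallk x]
            rw [heq, integral_const_mul, hRnorm t ht, mul_one]
          exact hx₀ (by rw [← h0, hI4])
        obtain ⟨y₀, hxy⟩ := hpair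
        have hwd : ∀ z, DifferentiableAt ℝ (fun s => (Φ s z - σ*T s z) * R s z) t := by
          intro z
          have heq : (fun s => (Φ s z - σ*T s z) * R s z)
              = fun s => (Φ s z - σ*(2*Real.arccos (c s)/Real.sin (Real.arccos (c s))
                * (Rstar z - R s z*c s)/R s z)) * R s z := by
            funext s; rw [hT s z, hH s]
          rw [heq]
          exact (((hφd z).sub ((hTq z).const_mul σ)).mul (hRd z)).differentiableAt
        have hAdiff : DifferentiableAt ℝ (fun s =>
            ((Φ s x₀ - σ*T s x₀)*R s x₀)*R s y₀ - ((Φ s y₀ - σ*T s y₀)*R s y₀)*R s x₀) t :=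
          ((hwd x₀).mul (hRd y₀).differentiableAt).sub ((hwd y₀).mul (hRd x₀).differentiableAt)
        have hAt : ((Φ t x₀ - σ*T t x₀)*R t x₀)*R t y₀ - ((Φ t y₀ - σ*T t y₀)*R t y₀)*R t x₀ ≠ 0 := by
          have h1 : ((Φ t x₀ - σ*T t x₀)*R t x₀)*R t y₀ - ((Φ t y₀ - σ*T t y₀)*R t y₀)*R t x₀
              = (R t x₀*R t y₀)*((Φ t x₀ - σ*T t x₀) - (Φ t y₀ - σ*T t y₀)) := by ring
          rw [h1]
          exact mul_ne_zero (mul_pos (hRt x₀) (hRt y₀)).ne' (sub_ne_zero.2 hxy)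
        have hQdiff : DifferentiableAt ℝ (fun s =>
            ((F s x₀ - σ*T s x₀)^2*(R s x₀)^2)*(R s y₀)^2
              - ((F s y₀ - σ*T s y₀)^2*(R s y₀)^2)*(R s x₀)^2) t :=
          ((hKdiff t ht x₀).mul ((hRd y₀).differentiableAt.pow 2)).sub
            ((hKdiff t ht y₀).mul ((hRd x₀).differentiableAt.pow 2))
        have hmdiff : DifferentiableAt ℝ m t := by
          have hR12 : ContinuousAt (fun s => R s x₀ * R s y₀) t :=
            (hRd x₀).continuousAt.mul (hRd y₀).continuousAt
          have h1 : ∀ᶠ s in nhds t,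
              ((Φ s x₀ - σ*T s x₀)*R s x₀)*R s y₀ - ((Φ s y₀ - σ*T s y₀)*R s y₀)*R s x₀ ≠ 0 :=
            hAdiff.continuousAt.eventually_ne hAt
          have h2 : ∀ᶠ s in nhds t, R s x₀*R s y₀ ≠ 0 :=
            hR12.eventually_ne (mul_pos (hRt x₀) (hRt y₀)).ne'
          have hev : m =ᶠ[nhds t] fun s =>
              (((Φ s x₀ - σ*T s x₀)*R s x₀)*R s y₀ + ((Φ s y₀ - σ*T s y₀)*R s y₀)*R s x₀
                - (((F s x₀ - σ*T s x₀)^2*(R s x₀)^2)*(R s y₀)^2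
                    - ((F s y₀ - σ*T s y₀)^2*(R s y₀)^2)*(R s x₀)^2)
                  / (((Φ s x₀ - σ*T s x₀)*R s x₀)*R s y₀ - ((Φ s y₀ - σ*T s y₀)*R s y₀)*R s x₀))
              / (2*(R s x₀*R s y₀)) := by
            filter_upwards [h1, h2] with s hA hR2
            have hQA : (((F s x₀ - σ*T s x₀)^2*(R s x₀)^2)*(R s y₀)^2
                  - ((F s y₀ - σ*T s y₀)^2*(R s y₀)^2)*(R s x₀)^2)
                = (((Φ s x₀ - σ*T s x₀)*R s x₀)*R s y₀ - ((Φ s y₀ - σ*T s y₀)*R s y₀)*R s x₀)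
                  * (((Φ s x₀ - σ*T s x₀)*R s x₀)*R s y₀ + ((Φ s y₀ - σ*T s y₀)*R s y₀)*R s x₀
                    - 2*m s*(R s x₀*R s y₀)) := by
              rw [hF s x₀, hF s y₀]; ring
            rw [hQA]
            have hA' : Φ s x₀ - σ * T s x₀ - (Φ s y₀ - σ * T s y₀) ≠ 0 := by
              intro h0; apply hA; linear_combination (R s x₀ * R s y₀) * h0
            have hRx : R s x₀ ≠ 0 := left_ne_zero_of_mul hR2
            have hRy : R s y₀ ≠ 0 := right_ne_zero_of_mul hR2
            field_simp
            ring
          have hMdiff : DifferentiableAt ℝ (fun s =>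
              (((Φ s x₀ - σ*T s x₀)*R s x₀)*R s y₀ + ((Φ s y₀ - σ*T s y₀)*R s y₀)*R s x₀
                - (((F s x₀ - σ*T s x₀)^2*(R s x₀)^2)*(R s y₀)^2
                    - ((F s y₀ - σ*T s y₀)^2*(R s y₀)^2)*(R s x₀)^2)
                  / (((Φ s x₀ - σ*T s x₀)*R s x₀)*R s y₀ - ((Φ s y₀ - σ*T s y₀)*R s y₀)*R s x₀))
              / (2*(R s x₀*R s y₀))) t := by
            apply DifferentiableAt.div
            · exact (((hwd x₀).mul (hRd y₀).differentiableAt).add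
                ((hwd y₀).mul (hRd x₀).differentiableAt)).sub (hQdiff.div hAdiff hAt)
            · exact (((hRd x₀).differentiableAt.mul (hRd y₀).differentiableAt).const_mul 2)
            · exact mul_ne_zero two_ne_zero (mul_pos (hRt x₀) (hRt y₀)).ne'
          exact hMdiff.congr_of_eventuallyEq hev
        have hmd : HasDerivAt m (deriv m t) t := hmdiff.hasDerivAt
        set m' := deriv m t with hm'def
        have hgd : ∀ x, HasDerivAt (fun s => (F s x - σ*T s x)^2*(R s x)^2)
            (σ*(2*H t/Real.sin (H t)*c t - 4)*((F t x - σ*T t x)*F t x*(R t x)^2)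
             + (σ*b*(Real.sin (H t) - H t*c t)/(2*(H t)^2*Real.sin (H t)))
                *((F t x - σ*T t x)*T t x*(R t x)^2)
             - 2*(Ψ t x*((F t x - σ*T t x)*(R t x)^2))
             + 2*(-(2*σ*m t) + (m t)^2/2 - m' + σ*b/2)*((F t x - σ*T t x)*(R t x)^2)) t := by
          intro x
          have heq : (fun s => (F s x - σ*T s x)^2*(R s x)^2)
              = fun s => ((Φ s x - m s) - σ*(2*Real.arccos (c s)/Real.sin (Real.arccos (c s))
                * (Rstar x - R s x*c s)/R s x))^2 * (R s x)^2 := by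
            funext s; rw [hF s x, hT s x, hH s]
          rw [heq]
          have hchain := ((((hφd x).sub hmd).sub
            ((hTq x).const_mul σ)).pow 2).mul ((hRd x).pow 2)
          convert hchain using 1
          · rfl
          · rfl
          · rfl
          simp only [Pi.sub_apply, Pi.div_apply, Pi.mul_apply, Pi.pow_apply]
          rw [hT t x, hF t x, ← hHeq, hcosH, ← hsin_eq]
          exact aig_pointwise_aux σ (H t) (Real.sin (H t)) (c t) b m' (m t) (Φ t x)
            (Ψ t x) (R t x) (Rstar x) (hRt x).ne' hsinpos.ne' hH0.ne'
        have hderiv_eq : ∀ x, deriv (fun s => (F s x - σ*T s x)^2*(R s x)^2) t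
            = σ*(2*H t/Real.sin (H t)*c t - 4)*((F t x - σ*T t x)*F t x*(R t x)^2)
             + (σ*b*(Real.sin (H t) - H t*c t)/(2*(H t)^2*Real.sin (H t)))
                *((F t x - σ*T t x)*T t x*(R t x)^2)
             - 2*(Ψ t x*((F t x - σ*T t x)*(R t x)^2))
             + 2*(-(2*σ*m t) + (m t)^2/2 - m' + σ*b/2)*((F t x - σ*T t x)*(R t x)^2) :=
          fun x => (hgd x).deriv
        have if1 : Integrable (fun x => (F t x - σ*T t x)*F t x*(R t x)^2) μ := by
          have heq : (fun x => (F t x - σ*T t x)*F t x*(R t x)^2)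
              = fun x => (F t x)^2*(R t x)^2 - σ*(F t x*T t x*(R t x)^2) :=
            funext fun x => by ring
          rw [heq]; exact iFF.sub (iFT.const_mul _)
        have hJ1 : ∫ x, (F t x - σ*T t x)*F t x*(R t x)^2 ∂μ = a - σ*b := by
          have heq : (fun x => (F t x - σ*T t x)*F t x*(R t x)^2)
              = fun x => (F t x)^2*(R t x)^2 - σ*(F t x*T t x*(R t x)^2) :=
            funext fun x => by ring
          rw [heq, integral_sub iFF (iFT.const_mul _), integral_const_mul]
        have if2 : Integrable (fun x => (F t x - σ*T t x)*T t x*(R t x)^2) μ := by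
          have heq : (fun x => (F t x - σ*T t x)*T t x*(R t x)^2)
              = fun x => F t x*T t x*(R t x)^2 - σ*((T t x)^2*(R t x)^2) :=
            funext fun x => by ring
          rw [heq]; exact iFT.sub (iTT.const_mul _)
        have hJ2 : ∫ x, (F t x - σ*T t x)*T t x*(R t x)^2 ∂μ = b - σ*d := by
          have heq : (fun x => (F t x - σ*T t x)*T t x*(R t x)^2)
              = fun x => F t x*T t x*(R t x)^2 - σ*((T t x)^2*(R t x)^2) :=
            funext fun x => by ring
          rw [heq, integral_sub iFT (iTT.const_mul _), integral_const_mul]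
        have if3 : Integrable (fun x => Ψ t x*((F t x - σ*T t x)*(R t x)^2)) μ := by
          have heq : (fun x => Ψ t x*((F t x - σ*T t x)*(R t x)^2))
              = fun x => Ψ t x*F t x*(R t x)^2 - σ*(Ψ t x*T t x*(R t x)^2) :=
            funext fun x => by ring
          rw [heq]; exact iΨF.sub (iΨT.const_mul _)
        have hJ3 : ∫ x, Ψ t x*((F t x - σ*T t x)*(R t x)^2) ∂μ
            = (∫ x, Ψ t x*F t x*(R t x)^2 ∂μ) - σ*q := by
          have heq : (fun x => Ψ t x*((F t x - σ*T t x)*(R t x)^2))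
              = fun x => Ψ t x*F t x*(R t x)^2 - σ*(Ψ t x*T t x*(R t x)^2) :=
            funext fun x => by ring
          rw [heq, integral_sub iΨF (iΨT.const_mul _), integral_const_mul]
        have hintderiv : ∫ x, deriv (fun s => (F s x - σ*T s x)^2*(R s x)^2) t ∂μ
            = σ*(2*H t/Real.sin (H t)*c t - 4)*(a - σ*b)
              + (σ*b*(Real.sin (H t) - H t*c t)/(2*(H t)^2*Real.sin (H t)))*(b - σ*d)
              - 2*((∫ x, Ψ t x*F t x*(R t x)^2 ∂μ) - σ*q)
              + 2*(-(2*σ*m t) + (m t)^2/2 - m' + σ*b/2)*0 := by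
          simp only [hderiv_eq]
          have iS1 : Integrable (fun x =>
              σ*(2*H t/Real.sin (H t)*c t - 4)*((F t x - σ*T t x)*F t x*(R t x)^2)
              + (σ*b*(Real.sin (H t) - H t*c t)/(2*(H t)^2*Real.sin (H t)))
                  *((F t x - σ*T t x)*T t x*(R t x)^2)) μ :=
            (if1.const_mul _).add (if2.const_mul _)
          have iS2 : Integrable (fun x =>
              σ*(2*H t/Real.sin (H t)*c t - 4)*((F t x - σ*T t x)*F t x*(R t x)^2)
              + (σ*b*(Real.sin (H t) - H t*c t)/(2*(H t)^2*Real.sin (H t)))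
                  *((F t x - σ*T t x)*T t x*(R t x)^2)
              - 2*(Ψ t x*((F t x - σ*T t x)*(R t x)^2))) μ :=
            iS1.sub (if3.const_mul 2)
          rw [integral_add iS2 (if4.const_mul _), integral_sub iS1 (if3.const_mul 2),
            integral_add (if1.const_mul _) (if2.const_mul _),
            integral_const_mul, integral_const_mul, integral_const_mul, integral_const_mul,
            hJ1, hJ2, hJ3, hI4]
        have hepeq : ∫ x, Ψ t x * (F t x * (R t x)^2) ∂μ = ∫ x, Ψ t x*F t x*(R t x)^2 ∂μ := by
          congr 1
          funext x
          ring
        have hKteq : K t = a - 2*σ*b + σ^2*d := by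
          show (∫ x, (F t x - σ*T t x)^2*(R t x)^2 ∂μ) = _
          have heq : (fun x => (F t x - σ*T t x)^2*(R t x)^2)
              = fun x => (F t x)^2*(R t x)^2 - (2*σ)*(F t x*T t x*(R t x)^2)
                + σ^2*((T t x)^2*(R t x)^2) := funext fun x => by ring
          have iC : Integrable (fun x => (F t x)^2*(R t x)^2
              - (2*σ)*(F t x*T t x*(R t x)^2)) μ := iFF.sub (iFT.const_mul _)
          rw [heq, integral_add iC (iTT.const_mul _), integral_sub iFF (iFT.const_mul _),
            integral_const_mul, integral_const_mul]
        rw [hKteq, hintderiv, hepeq]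
        have hfin : σ*(1/2*(a - 2*σ*b + σ^2*d) + (e t - estar))
            + (1/2*(σ*(2*H t/Real.sin (H t)*c t - 4)*(a - σ*b)
              + (σ*b*(Real.sin (H t) - H t*c t)/(2*(H t)^2*Real.sin (H t)))*(b - σ*d)
              - 2*((∫ x, Ψ t x*F t x*(R t x)^2 ∂μ) - σ*q)
              + 2*(-(2*σ*m t) + (m t)^2/2 - m' + σ*b/2)*0)
              + ∫ x, Ψ t x*F t x*(R t x)^2 ∂μ)
            = -(σ*a)/2
              + (σ*(Real.sin (H t) - H t*c t)/(4*(H t)^2*Real.sin (H t)))*(b^2 - a*d)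
              + σ*(q - (estar - e t - σ^2/2*d)) := by
          rw [hd4]
          field_simp
          ring
        rw [hfin]
        have hterm1 : -(σ*a)/2 ≤ 0 := by
          have := mul_nonneg hσpos.le ha0
          linarith
        have hterm2 : (σ*(Real.sin (H t) - H t*c t)/(4*(H t)^2*Real.sin (H t)))*(b^2 - a*d) ≤ 0 := by
          apply mul_nonpos_of_nonneg_of_nonpos
          · apply div_nonneg (mul_nonneg hσpos.le htanpos.le)
            exact (mul_pos (mul_pos (by norm_num) (pow_pos hH0 2)) hsinpos).le
          · linarith
        have hterm3 : σ*(q - (estar - e t - σ^2/2*d)) ≤ 0 :=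
          mul_nonpos_of_nonneg_of_nonpos hσpos.le (by linarith)
        linarith

  have hant : AntitoneOn Ly (Set.Ici 0) := by
    apply antitoneOn_of_deriv_nonpos (convex_Ici 0)
    · exact fun t ht => ((key t ht).1).continuousAt.continuousWithinAt
    · intro t ht
      rw [interior_Ici] at ht
      exact ((key t ht.le).1).differentiableAt.differentiableWithinAt
    · intro t ht
      rw [interior_Ici] at ht
      have h := key t ht.le
      rw [h.1.deriv]
      exact mul_nonpos_of_nonneg_of_nonpos (Real.exp_nonneg _) h.2
  refine ⟨hant, fun t ht => ?_⟩
  have h1 : Ly t ≤ Ly 0 := hant (Set.mem_Ici.2 le_rfl) (Set.mem_Ici.2 ht) ht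
  have hK0 : 0 ≤ K t := integral_nonneg (fun x => by positivity)
  have h2 : e t - estar ≤ Real.exp (-(σ*t)) * Ly t := by
    rw [hLy t, ← mul_assoc, ← Real.exp_add]
    simp only [neg_add_cancel, Real.exp_zero, one_mul]
    have hKt : (∫ x, (F t x - σ * T t x)^2 * (R t x)^2 ∂μ) = K t := rfl
    rw [hKt]
    linarith
  calc e t - estar ≤ Real.exp (-(σ*t)) * Ly t := h2
    _ ≤ Real.exp (-(σ*t)) * Ly 0 := mul_le_mul_of_nonneg_left h1 (Real.exp_nonneg _)
end

section
/- For every t, the following inequality holds: ∫ ∂_tT(t,x) · F(t,x) · R(t,x)² dμ(x) + ½ ∫ T(t,x) · F(t,x)² · R(t,x)² dμ(x) ≥ − ∫ F(t,x)² · R(t,x)² dμ(x). -/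
open MeasureTheory

lemma sq_integrable_of_memL2 {Ω : Type*} [MeasurableSpace Ω] {μ : Measure Ω} {f : Ω → ℝ}
    (hf : MemLp f 2 μ) : Integrable (fun x => f x ^ 2) μ :=
  (memLp_two_iff_integrable_sq hf.aestronglyMeasurable).1 hf

lemma mul_integrable_of_memL2 {Ω : Type*} [MeasurableSpace Ω] {μ : Measure Ω} {f g : Ω → ℝ}
    (hf : MemLp f 2 μ) (hg : MemLp g 2 μ) : Integrable (fun x => f x * g x) μ := by
  have hb : Integrable (fun x => f x ^ 2 + g x ^ 2) μ :=
    (sq_integrable_of_memL2 hf).add (sq_integrable_of_memL2 hg)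
  refine Integrable.mono' hb (hf.aestronglyMeasurable.mul hg.aestronglyMeasurable)
    (Filter.Eventually.of_forall fun x => ?_)
  rw [Real.norm_eq_abs, abs_mul]
  nlinarith [sq_nonneg (|f x| - |g x|), sq_abs (f x), sq_abs (g x)]

lemma cauchy_schwarz_int {Ω : Type*} [MeasurableSpace Ω] {μ : Measure Ω} {f g : Ω → ℝ}
    (hf : MemLp f 2 μ) (hg : MemLp g 2 μ) :
    (∫ x, f x * g x ∂μ)^2 ≤ (∫ x, f x ^ 2 ∂μ) * (∫ x, g x ^ 2 ∂μ) := by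
  have hf2 := sq_integrable_of_memL2 hf
  have hg2 := sq_integrable_of_memL2 hg
  have hfg := mul_integrable_of_memL2 hf hg
  set A := ∫ x, f x ^ 2 ∂μ with hA
  set B := ∫ x, g x ^ 2 ∂μ with hB
  set Cv := ∫ x, f x * g x ∂μ with hC
  have hAnn : 0 ≤ A := integral_nonneg fun x => sq_nonneg _
  have hBnn : 0 ≤ B := integral_nonneg fun x => sq_nonneg _
  by_cases hB0 : B = 0
  · have hiz : ∫ x, g x ^ 2 ∂μ = 0 := by rw [← hB]; exact hB0
    have hg0 : ∀ᵐ x ∂μ, g x ^ 2 = 0 :=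
      (integral_eq_zero_iff_of_nonneg (fun x => sq_nonneg (g x)) hg2).1 hiz
    have hCv0 : Cv = 0 := by
      rw [hC]
      refine integral_eq_zero_of_ae ?_
      filter_upwards [hg0] with x hx
      have : g x = 0 := by nlinarith [sq_nonneg (g x)]
      simp [this]
    rw [hCv0, hB0]; simp
  · have hBpos : 0 < B := lt_of_le_of_ne hBnn (Ne.symm hB0)
    have hexp : (fun x => (B * f x - Cv * g x)^2)
        = fun x => B^2 * f x ^2 - 2*B*Cv * (f x * g x) + Cv^2 * g x ^2 := by
      funext x; ring
    have i1 : Integrable (fun x => B^2 * f x ^2 - 2*B*Cv * (f x * g x)) μ :=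
      (hf2.const_mul _).sub (hfg.const_mul _)
    have i2 : Integrable (fun x => Cv^2 * g x ^2) μ := hg2.const_mul _
    have h0 : 0 ≤ ∫ x, (B * f x - Cv * g x)^2 ∂μ := integral_nonneg fun x => sq_nonneg _
    rw [hexp, integral_add i1 i2, integral_sub (hf2.const_mul _) (hfg.const_mul _),
      integral_const_mul, integral_const_mul, integral_const_mul, ← hA, ← hB, ← hC] at h0
    nlinarith [h0, hBpos]

/-- Key inequality in the Fisher–Rao Lyapunov analysis:
`∫ ∂ₜT · F · R² dμ + ½ ∫ T · F² · R² dμ ≥ −∫ F² · R² dμ`. -/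
theorem fisher_rao_transport_derivative_inequality
    {Ω : Type*} [MeasurableSpace Ω] (μ : Measure Ω)
    (R Φ : ℝ → Ω → ℝ) (Rstar : Ω → ℝ)
    (c m H : ℝ → ℝ) (F T : ℝ → Ω → ℝ)
    (hRstarnorm : ∫ x, (Rstar x)^2 ∂μ = 1)
    (hRpos : ∀ t x, 0 < R t x)
    (hRnorm : ∀ t, ∫ x, (R t x)^2 ∂μ = 1)
    (hΦdiff : ∀ t x, DifferentiableAt ℝ (fun s => Φ s x) t)
    (hm : ∀ t, m t = ∫ x, Φ t x * (R t x)^2 ∂μ)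
    (hF : ∀ t x, F t x = Φ t x - m t)
    (hflowR : ∀ t x, HasDerivAt (fun s => R s x) ((1/2) * F t x * R t x) t)
    (hc : ∀ t, c t = ∫ x, R t x * Rstar x ∂μ)
    (hcIoo : ∀ t, c t ∈ Set.Ioo (0:ℝ) 1)
    (hH : ∀ t, H t = Real.arccos (c t))
    (hT : ∀ t x, T t x = (2 * H t / Real.sin (H t)) * (Rstar x - R t x * c t) / R t x)
    (hc' : ∀ t, HasDerivAt c (∫ x, ((1/2) * F t x * R t x) * Rstar x ∂μ) t)
    (hL2F : ∀ t, MemLp (fun x => F t x * R t x) 2 μ)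
    (hL2T : ∀ t, MemLp (fun x => (Rstar x / R t x - c t) * R t x) 2 μ)
    (hint1 : ∀ t, Integrable (fun x => deriv (fun s => T s x) t * F t x * (R t x)^2) μ)
    (hint2 : ∀ t, Integrable (fun x => T t x * (F t x)^2 * (R t x)^2) μ)
    (hint3 : ∀ t, Integrable (fun x => (F t x)^2 * (R t x)^2) μ) :
    ∀ t : ℝ,
      (∫ x, deriv (fun s => T s x) t * F t x * (R t x)^2 ∂μ)
        + (1/2) * ∫ x, T t x * (F t x)^2 * (R t x)^2 ∂μ
      ≥ - ∫ x, (F t x)^2 * (R t x)^2 ∂μ := by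
  intro t
  obtain ⟨hc0, hc1⟩ := hcIoo t
  have hc1' : c t ≠ 1 := ne_of_lt hc1
  have hcm1 : c t ≠ -1 := by linarith
  -- trigonometric facts
  have hcosθ : Real.cos (H t) = c t := by
    rw [hH]; exact Real.cos_arccos (by linarith) hc1.le
  have hsinθ : Real.sin (H t) = Real.sqrt (1 - (c t)^2) := by
    rw [hH]; exact Real.sin_arccos _
  have hsinpos : 0 < Real.sin (H t) := by
    rw [hsinθ]; exact Real.sqrt_pos.2 (by nlinarith)
  have hsne : Real.sin (H t) ≠ 0 := ne_of_gt hsinpos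
  have hs2 : Real.sin (H t) ^ 2 = 1 - (c t)^2 := by
    rw [hsinθ]; exact Real.sq_sqrt (by nlinarith)
  have hθpos : 0 < H t := by rw [hH]; exact Real.arccos_pos.2 hc1
  have hθlt : H t < Real.pi / 2 := by rw [hH]; exact Real.arccos_lt_pi_div_two.2 hc0
  have htan : H t * c t < Real.sin (H t) := by
    have h := Real.lt_tan hθpos hθlt
    rw [Real.tan_eq_sin_div_cos, hcosθ] at h
    exact (lt_div_iff₀ hc0).1 h
  -- derivatives of c, H and the prefactor
  set cd := ∫ x, ((1/2) * F t x * R t x) * Rstar x ∂μ with hcd_def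
  have hcd : HasDerivAt c cd t := hc' t
  have hHfun : H = fun s => Real.arccos (c s) := funext hH
  have hHd : HasDerivAt H (-(1 / Real.sin (H t)) * cd) t := by
    rw [hsinθ, hHfun]
    exact (Real.hasDerivAt_arccos hcm1 hc1').comp t hcd
  have hsinHd : HasDerivAt (fun u => Real.sin (H u))
      (Real.cos (H t) * (-(1 / Real.sin (H t)) * cd)) t := hHd.sin
  set κd := ((2 * (-(1 / Real.sin (H t)) * cd)) * Real.sin (H t)
      - (2 * H t) * (Real.cos (H t) * (-(1 / Real.sin (H t)) * cd))) / Real.sin (H t) ^ 2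
    with hκd_def
  have hκd : HasDerivAt (fun u => 2 * H u / Real.sin (H u)) κd t :=
    (hHd.const_mul 2).div hsinHd hsne
  set κ := 2 * H t / Real.sin (H t) with hκ_def
  -- pointwise derivative of T
  have hTd : ∀ x : Ω, HasDerivAt (fun u => T u x)
      (κd * (Rstar x / R t x - c t)
        + κ * ((0 * R t x - Rstar x * ((1/2) * F t x * R t x)) / (R t x)^2 - cd)) t := by
    intro x
    have hRne : R t x ≠ 0 := (hRpos t x).ne'
    have hfun : (fun u => T u x)
        = fun u => (2 * H u / Real.sin (H u)) * (Rstar x / R u x - c u) := by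
      funext u
      have hRu : R u x ≠ 0 := (hRpos u x).ne'
      rw [hT u x, mul_div_assoc]
      congr 1
      field_simp
    rw [hfun]
    exact hκd.mul (((hasDerivAt_const t (Rstar x)).div (hflowR t x) hRne).sub hcd)
  -- auxiliary functions
  set G := fun x : Ω => Rstar x - R t x * c t with hG_def
  set P := fun x : Ω => F t x * R t x with hP_def
  have hP2 : MemLp P 2 μ := hL2F t
  have hG2 : MemLp G 2 μ := by
    have heq : (fun x => (Rstar x / R t x - c t) * R t x) = G := by
      funext x
      have hRne : R t x ≠ 0 := (hRpos t x).ne'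
      simp only [hG_def]
      field_simp
    exact heq ▸ hL2T t
  have hr2int : Integrable (fun x => (R t x)^2) μ := by
    by_contra h
    have := hRnorm t
    rw [integral_undef h] at this
    norm_num at this
  have hrmeas : AEStronglyMeasurable (R t) μ := by
    have h1 : AEStronglyMeasurable (fun x => Real.sqrt ((R t x)^2)) μ :=
      Real.continuous_sqrt.comp_aestronglyMeasurable hr2int.aestronglyMeasurable
    exact h1.congr (Filter.Eventually.of_forall fun x => Real.sqrt_sq (hRpos t x).le)
  have hr2 : MemLp (R t) 2 μ := (memLp_two_iff_integrable_sq hrmeas).2 hr2int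
  have hS2 : MemLp Rstar 2 μ := by
    have heq : Rstar = fun x => G x + c t * R t x := by
      funext x; simp only [hG_def]; ring
    rw [heq]; exact hG2.add (hr2.const_mul (c t))
  have hS2int : Integrable (fun x => (Rstar x)^2) μ := sq_integrable_of_memL2 hS2
  -- integrable products
  have hGP : Integrable (fun x => G x * P x) μ := mul_integrable_of_memL2 hG2 hP2
  have hPr : Integrable (fun x => P x * R t x) μ := mul_integrable_of_memL2 hP2 hr2
  have hFr2 : Integrable (fun x => F t x * (R t x)^2) μ := by
    have heq : (fun x => F t x * (R t x)^2) = fun x => P x * R t x := by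
      funext x; simp only [hP_def]; ring
    rw [heq]; exact hPr
  have hSr : Integrable (fun x => R t x * Rstar x) μ := mul_integrable_of_memL2 hr2 hS2
  -- key integral identities
  have hintFr2 : ∫ x, F t x * (R t x)^2 ∂μ = 0 := by
    have hΦint : Integrable (fun x => Φ t x * (R t x)^2) μ := by
      have h2 : (fun x => Φ t x * (R t x)^2)
          = fun x => F t x * (R t x)^2 + m t * (R t x)^2 := by
        funext x; rw [hF t x]; ring
      rw [h2]; exact hFr2.add (hr2int.const_mul _)
    have heq : (fun x => F t x * (R t x)^2)
        = fun x => Φ t x * (R t x)^2 - m t * (R t x)^2 := by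
      funext x; rw [hF t x]; ring
    rw [heq, integral_sub hΦint (hr2int.const_mul _), integral_const_mul, hRnorm t, ← hm t]
    ring
  have hintSr : ∫ x, R t x * Rstar x ∂μ = c t := (hc t).symm
  have hintGP : ∫ x, G x * P x ∂μ = 2 * cd := by
    have heq : (fun x => ((1/2) * F t x * R t x) * Rstar x)
        = fun x => (1/2) * (G x * P x) + ((c t)/2) * (F t x * (R t x)^2) := by
      funext x; simp only [hG_def, hP_def]; ring
    have h2 : cd = (1/2) * (∫ x, G x * P x ∂μ) + ((c t)/2) * (0:ℝ) := by
      rw [hcd_def, heq, integral_add (hGP.const_mul _) (hFr2.const_mul _),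
        integral_const_mul, integral_const_mul, hintFr2]
    rw [h2]; ring
  have hintGG : ∫ x, G x ^ 2 ∂μ = 1 - (c t)^2 := by
    have heq : (fun x => G x ^ 2)
        = fun x => (Rstar x)^2 - 2 * (c t) * (R t x * Rstar x) + (c t)^2 * (R t x)^2 := by
      funext x; simp only [hG_def]; ring
    have i1 : Integrable (fun x => (Rstar x)^2 - 2 * (c t) * (R t x * Rstar x)) μ :=
      hS2int.sub (hSr.const_mul _)
    rw [heq, integral_add i1 (hr2int.const_mul _), integral_sub hS2int (hSr.const_mul _),
      integral_const_mul, integral_const_mul, hRstarnorm, hintSr, hRnorm t]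
    ring
  set I := ∫ x, (F t x)^2 * (R t x)^2 ∂μ with hI_def
  have hintPP : ∫ x, P x ^ 2 ∂μ = I := by
    rw [hI_def]
    congr 1
    funext x
    simp only [hP_def]; ring
  have hInn : 0 ≤ I := by
    rw [hI_def]; exact integral_nonneg fun x => by positivity
  have hCS : (2 * cd)^2 ≤ (1 - (c t)^2) * I := by
    have h := cauchy_schwarz_int hG2 hP2
    rw [hintGP, hintGG, hintPP] at h
    exact h
  -- pointwise identity for the integrand
  have hkey : ∀ x : Ω, deriv (fun s => T s x) t * F t x * (R t x)^2
      + (1/2) * (T t x * (F t x)^2 * (R t x)^2)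
      = κd * (G x * P x) + (-(κ * cd)) * (F t x * (R t x)^2)
        + (-((1/2) * κ * c t)) * ((F t x)^2 * (R t x)^2) := by
    intro x
    have hRne : R t x ≠ 0 := (hRpos t x).ne'
    rw [(hTd x).deriv, hT t x, hκ_def, hκd_def]
    simp only [hG_def, hP_def]
    field_simp [hsne, hRne]
    ring
  -- the integral computation
  have hsplit : (∫ x, deriv (fun s => T s x) t * F t x * (R t x)^2 ∂μ)
      + (1/2) * ∫ x, T t x * (F t x)^2 * (R t x)^2 ∂μ
      = κd * (2 * cd) + (-((1/2) * κ * c t)) * I := by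
    have h1 : ∫ x, (deriv (fun s => T s x) t * F t x * (R t x)^2
          + (1/2) * (T t x * (F t x)^2 * (R t x)^2)) ∂μ
        = (∫ x, deriv (fun s => T s x) t * F t x * (R t x)^2 ∂μ)
          + (1/2) * ∫ x, T t x * (F t x)^2 * (R t x)^2 ∂μ := by
      rw [integral_add (hint1 t) ((hint2 t).const_mul _), integral_const_mul]
    have h2 : (fun x => deriv (fun s => T s x) t * F t x * (R t x)^2
          + (1/2) * (T t x * (F t x)^2 * (R t x)^2))
        = fun x => κd * (G x * P x) + (-(κ * cd)) * (F t x * (R t x)^2)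
          + (-((1/2) * κ * c t)) * ((F t x)^2 * (R t x)^2) := funext hkey
    have i1 : Integrable (fun x => κd * (G x * P x) + (-(κ * cd)) * (F t x * (R t x)^2)) μ :=
      (hGP.const_mul _).add (hFr2.const_mul _)
    rw [← h1, h2, integral_add i1 ((hint3 t).const_mul _),
      integral_add (hGP.const_mul _) (hFr2.const_mul _),
      integral_const_mul, integral_const_mul, integral_const_mul, hintGP, hintFr2, ← hI_def]
    ring
  -- the final inequality
  have hfinal : κd * (2 * cd) + (-((1/2) * κ * c t)) * I ≥ -I := by
    have h1 : 0 ≤ (Real.sin (H t) - H t * c t) * (Real.sin (H t)^2 * I - (2 * cd)^2) :=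
      mul_nonneg (by linarith) (by nlinarith)
    have heq2 : κd * (2 * cd) + (-((1/2) * κ * c t)) * I + I
        = ((Real.sin (H t) - H t * c t) * (Real.sin (H t)^2 * I - (2 * cd)^2))
          / Real.sin (H t) ^ 3 := by
      rw [hκd_def, hκ_def, hcosθ]
      field_simp
      ring
    have h2 : 0 ≤ ((Real.sin (H t) - H t * c t) * (Real.sin (H t)^2 * I - (2 * cd)^2))
        / Real.sin (H t) ^ 3 := div_nonneg h1 (by positivity)
    have h3 : 0 ≤ κd * (2 * cd) + (-((1/2) * κ * c t)) * I + I := by rw [heq2]; exact h2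
    linarith
  rw [hsplit]
  exact hfinal
end

section
/- Suppose R, Φ solve the Fisher–Rao geodesic equations in square-root coordinates. Then for every x, the map t ↦ R(t,x) is twice differentiable, and ∂_tt R(t,x) = ¼ (m(t)² − q(t)) R(t,x) for all t and x; i.e., R satisfies the wave equation ∂_tt R = −H² R with constant H² = ¼(q − m²). -/
open MeasureTheory

/-- Along the Fisher–Rao geodesic equations in square-root coordinates,
`R` is twice differentiable in time and satisfies the wave equation
`∂ₜₜR(t,x) = ¼ (m(t)² − q(t)) R(t,x)`, i.e. `∂ₜₜR = −H²R` with `H² = ¼(q − m²)`. -/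
theorem fisher_rao_geodesic_wave_equation
    {Ω : Type*} [MeasurableSpace Ω] (μ : Measure Ω)
    (R Φ : ℝ → Ω → ℝ) (m q : ℝ → ℝ)
    (hm : ∀ t, m t = ∫ x, Φ t x * (R t x)^2 ∂μ)
    (hq : ∀ t, q t = ∫ x, (Φ t x)^2 * (R t x)^2 ∂μ)
    (hRnorm : ∀ t, ∫ x, (R t x)^2 ∂μ = 1)
    (hflowR : ∀ t x, HasDerivAt (fun s => R s x) ((1/2) * (Φ t x - m t) * R t x) t)
    (hflowΦ : ∀ t x, HasDerivAt (fun s => Φ s x) (-(1/2) * (Φ t x)^2 + m t * Φ t x) t)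
    (hL2ΦR : ∀ t, MemLp (fun x => Φ t x * R t x) 2 μ)
    (hL2R : ∀ t, MemLp (fun x => R t x) 2 μ)
    (hm' : ∀ t, HasDerivAt m (∫ x, deriv (fun s => Φ s x * (R s x)^2) t ∂μ) t)
    (hq' : ∀ t, HasDerivAt q (∫ x, deriv (fun s => (Φ s x)^2 * (R s x)^2) t ∂μ) t) :
    ∀ t x, HasDerivAt (fun s => deriv (fun r => R r x) s)
      ((1/4) * ((m t)^2 - q t) * R t x) t := by
  intro t x
  -- pointwise value of the derivative of Φ R²
  have hD : ∀ s y, deriv (fun r => Φ r y * (R r y)^2) s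
      = (1/2) * ((Φ s y)^2 * (R s y)^2) := by
    intro s y
    have h := ((hflowΦ s y).fun_mul ((hflowR s y).fun_pow 2)).deriv
    rw [h]; ring
  -- m' = (1/2) q t
  have hm2 : HasDerivAt m ((1/2) * q t) t := by
    have h := hm' t
    have : (∫ x, deriv (fun s => Φ s x * (R s x)^2) t ∂μ) = (1/2) * q t := by
      simp only [hD]
      rw [MeasureTheory.integral_const_mul, hq t]
    rwa [this] at h
  have heq : (fun s => deriv (fun r => R r x) s)
      = fun s => (1/2) * (Φ s x - m s) * R s x :=
    funext fun s => (hflowR s x).deriv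
  rw [heq]
  have H := (((hflowΦ t x).fun_sub hm2).const_mul (1/2 : ℝ)).fun_mul (hflowR t x)
  exact H.congr_deriv (by ring)
end

section
/- Suppose R, Φ solve the Fisher–Rao geodesic equations in square-root coordinates. Then the Fisher–Rao kinetic energy t ↦ q(t) − m(t)² = ∫ Φ(t,·)² R(t,·)² dμ − (∫ Φ(t,·) R(t,·)² dμ)² is constant in t; i.e., the Hamiltonian is invariant along the Fisher–Rao geodesic flow. -/
open MeasureTheory

/-- The Fisher–Rao kinetic energy (Hamiltonian) `q(t) − m(t)²` is invariant along the
Fisher–Rao geodesic flow in square-root coordinates. -/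
theorem fisher_rao_geodesic_hamiltonian_invariant
    {Ω : Type*} [MeasurableSpace Ω] (μ : Measure Ω)
    (R Φ : ℝ → Ω → ℝ) (m q : ℝ → ℝ)
    (hm : ∀ t, m t = ∫ x, Φ t x * (R t x)^2 ∂μ)
    (hq : ∀ t, q t = ∫ x, (Φ t x)^2 * (R t x)^2 ∂μ)
    (hRnorm : ∀ t, ∫ x, (R t x)^2 ∂μ = 1)
    (hflowR : ∀ t x, HasDerivAt (fun s => R s x) ((1/2) * (Φ t x - m t) * R t x) t)
    (hflowΦ : ∀ t x, HasDerivAt (fun s => Φ s x) (-(1/2) * (Φ t x)^2 + m t * Φ t x) t)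
    (hL2ΦR : ∀ t, MemLp (fun x => Φ t x * R t x) 2 μ)
    (hL2R : ∀ t, MemLp (fun x => R t x) 2 μ)
    (hm' : ∀ t, HasDerivAt m (∫ x, deriv (fun s => Φ s x * (R s x)^2) t ∂μ) t)
    (hq' : ∀ t, HasDerivAt q (∫ x, deriv (fun s => (Φ s x)^2 * (R s x)^2) t ∂μ) t) :
    ∀ t₁ t₂ : ℝ, q t₁ - (m t₁)^2 = q t₂ - (m t₂)^2 := by
  have key : ∀ t, HasDerivAt (fun s => q s - (m s)^2) 0 t := by
    intro t
    have hd1 : ∀ x, deriv (fun s => Φ s x * (R s x)^2) t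
        = 1/2 * ((Φ t x)^2 * (R t x)^2) := by
      intro x
      have h : HasDerivAt (fun s => Φ s x * (R s x)^2)
          ((-(1/2) * (Φ t x)^2 + m t * Φ t x) * (R t x)^2
            + Φ t x * (2 * (R t x)^(2-1) * ((1/2) * (Φ t x - m t) * R t x))) t :=
        (hflowΦ t x).mul ((hflowR t x).pow 2)
      rw [h.deriv]; ring
    have hd2 : ∀ x, deriv (fun s => (Φ s x)^2 * (R s x)^2) t
        = m t * ((Φ t x)^2 * (R t x)^2) := by
      intro x
      have h : HasDerivAt (fun s => (Φ s x)^2 * (R s x)^2)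
          ((2 * (Φ t x)^(2-1) * (-(1/2) * (Φ t x)^2 + m t * Φ t x)) * (R t x)^2
            + (Φ t x)^2 * (2 * (R t x)^(2-1) * ((1/2) * (Φ t x - m t) * R t x))) t :=
        ((hflowΦ t x).pow 2).mul ((hflowR t x).pow 2)
      rw [h.deriv]; ring
    have hm'' : HasDerivAt m (1/2 * q t) t := by
      have h := hm' t
      simp_rw [hd1] at h
      rwa [integral_const_mul, ← hq t] at h
    have hq'' : HasDerivAt q (m t * q t) t := by
      have h := hq' t
      simp_rw [hd2] at h
      rwa [integral_const_mul, ← hq t] at h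
    have h : HasDerivAt (fun s => q s - (m s)^2) _ t := hq''.sub (hm''.pow 2)
    convert h using 1
    push_cast; ring
  intro t₁ t₂
  exact is_const_of_deriv_eq_zero (fun t => (key t).differentiableAt)
    (fun t => (key t).deriv) t₁ t₂
end

section
/- Then 0 < c < 1, where c := ∫ R₀ R₁ dμ, so H := arccos c lies in (0, π/2). Moreover, for every t ∈ [0,1], the function R_t := (sin(tH)·R₁ + sin((1−t)H)·R₀)/sin(H) satisfies R_t > 0 μ-almost everywhere and ∫ R_t² dμ = 1, with R_0 = R₀ and R_1 = R₁. Consequently ρ_t := R_t² is a curve of probability densities connecting ρ₀ = R₀² and ρ₁ = R₁² (the Fisher–Rao geodesic between two positive densities exists and stays positive). -/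
open MeasureTheory

/-- Existence and positivity of the Fisher–Rao geodesic between two positive densities:
if `R₀, R₁ > 0` a.e. are unit vectors of `L²(μ)` that are not a.e. equal, then
`c = ∫ R₀R₁ ∈ (0,1)`, `H = arccos c ∈ (0, π/2)`, and for `t ∈ [0,1]` the curve
`R_t = (sin(tH)R₁ + sin((1−t)H)R₀)/sin H` is positive a.e. with `∫ R_t² = 1`,
connecting `R₀` to `R₁`. -/
theorem fisher_rao_geodesic_between_positive_densities
    {Ω : Type*} [MeasurableSpace Ω] (μ : Measure Ω) (hμ : μ ≠ 0)
    (R₀ R₁ : Ω → ℝ)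
    (hR₀L2 : MemLp R₀ 2 μ) (hR₁L2 : MemLp R₁ 2 μ)
    (hR₀pos : ∀ᵐ x ∂μ, 0 < R₀ x) (hR₁pos : ∀ᵐ x ∂μ, 0 < R₁ x)
    (hR₀norm : ∫ x, (R₀ x)^2 ∂μ = 1) (hR₁norm : ∫ x, (R₁ x)^2 ∂μ = 1)
    (hne : ¬ (R₀ =ᵐ[μ] R₁))
    (c : ℝ) (hc : c = ∫ x, R₀ x * R₁ x ∂μ)
    (H : ℝ) (hH : H = Real.arccos c)
    (Rt : ℝ → Ω → ℝ)
    (hRt : ∀ t x, Rt t x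
      = (Real.sin (t*H) * R₁ x + Real.sin ((1-t)*H) * R₀ x) / Real.sin H) :
    (0 < c ∧ c < 1) ∧
    H ∈ Set.Ioo 0 (Real.pi/2) ∧
    (∀ t ∈ Set.Icc (0:ℝ) 1,
      (∀ᵐ x ∂μ, 0 < Rt t x) ∧ ∫ x, (Rt t x)^2 ∂μ = 1) ∧
    (∀ x, Rt 0 x = R₀ x) ∧ (∀ x, Rt 1 x = R₁ x) := by
  -- Integrability facts
  have hi0 : Integrable (fun x => (R₀ x)^2) μ := hR₀L2.integrable_sq
  have hi1 : Integrable (fun x => (R₁ x)^2) μ := hR₁L2.integrable_sq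
  have hiadd : Integrable (fun x => (R₀ x + R₁ x)^2) μ := (hR₀L2.add hR₁L2).integrable_sq
  have hi01 : Integrable (fun x => R₀ x * R₁ x) μ := by
    have : (fun x => R₀ x * R₁ x)
        = fun x => ((R₀ x + R₁ x)^2 - (R₀ x)^2 - (R₁ x)^2) / 2 := by
      funext x; ring
    rw [this]
    exact ((hiadd.sub hi0).sub hi1).div_const 2
  have hisub : Integrable (fun x => (R₀ x - R₁ x)^2) μ := (hR₀L2.sub hR₁L2).integrable_sq
  -- c > 0
  have hprodpos : ∀ᵐ x ∂μ, 0 < R₀ x * R₁ x := by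
    filter_upwards [hR₀pos, hR₁pos] with x h0 h1; positivity
  have hcpos : 0 < c := by
    rw [hc]
    rw [integral_pos_iff_support_of_nonneg_ae (hprodpos.mono fun x h => h.le) hi01]
    have hcompl : μ (Function.support fun x => R₀ x * R₁ x)ᶜ = 0 := by
      apply measure_mono_null _ (ae_iff.mp hprodpos)
      intro x hx
      simp only [Function.mem_support, not_not, Set.mem_compl_iff] at hx ⊢
      simp [Set.mem_setOf_eq, hx]
    have huniv : 0 < μ Set.univ := Measure.measure_univ_pos.mpr hμ
    by_contra h
    push_neg at h
    have h0 : μ (Function.support fun x => R₀ x * R₁ x) = 0 := le_antisymm h zero_le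
    have : μ Set.univ = 0 := by
      have := measure_union_le (μ := μ) (Function.support fun x => R₀ x * R₁ x)
        (Function.support fun x => R₀ x * R₁ x)ᶜ
      rw [Set.union_compl_self, h0, hcompl] at this
      simpa using this
    exact absurd this huniv.ne'
  -- ∫ (R₀ - R₁)² = 2 - 2c
  have hsubint : ∫ x, (R₀ x - R₁ x)^2 ∂μ = 2 - 2*c := by
    have hexp : (fun x => (R₀ x - R₁ x)^2)
        = fun x => (R₀ x)^2 + (R₁ x)^2 - 2 * (R₀ x * R₁ x) := by
      funext x; ring
    have hsum : Integrable (fun x => (R₀ x)^2 + (R₁ x)^2) μ := hi0.add hi1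
    rw [hexp, integral_sub hsum (hi01.const_mul 2), integral_add hi0 hi1,
      integral_const_mul, hR₀norm, hR₁norm, hc]
    ring
  have hclt : c < 1 := by
    have hnz : ∫ x, (R₀ x - R₁ x)^2 ∂μ ≠ 0 := by
      intro h
      apply hne
      have := (integral_eq_zero_iff_of_nonneg_ae
        (Filter.Eventually.of_forall fun x => sq_nonneg (R₀ x - R₁ x)) hisub).mp h
      filter_upwards [this] with x hx
      have : (R₀ x - R₁ x)^2 = 0 := hx
      have := pow_eq_zero_iff (n := 2) (by norm_num) |>.mp this
      linarith
    have hnn : 0 ≤ ∫ x, (R₀ x - R₁ x)^2 ∂μ :=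
      integral_nonneg fun x => sq_nonneg _
    rw [hsubint] at hnz hnn
    rcases lt_or_eq_of_le hnn with h | h
    · linarith
    · exact absurd h.symm hnz
  -- H ∈ (0, π/2)
  have hHpos : 0 < H := hH ▸ Real.arccos_pos.mpr hclt
  have hHlt : H < Real.pi / 2 := hH ▸ Real.arccos_lt_pi_div_two.mpr hcpos
  have hsinHpos : 0 < Real.sin H :=
    Real.sin_pos_of_pos_of_lt_pi hHpos (by linarith [Real.pi_pos])
  have hcosH : Real.cos H = c := by
    rw [hH]; exact Real.cos_arccos (by linarith) (by linarith)
  refine ⟨⟨hcpos, hclt⟩, ⟨hHpos, hHlt⟩, ?_, ?_, ?_⟩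
  · intro t ht
    set a := Real.sin (t*H) with ha
    set b := Real.sin ((1-t)*H) with hb
    have hta : 0 ≤ t * H := mul_nonneg ht.1 hHpos.le
    have htb : 0 ≤ (1-t) * H := mul_nonneg (by linarith [ht.2]) hHpos.le
    have htaH : t * H ≤ H := by nlinarith [ht.2]
    have htbH : (1-t) * H ≤ H := by nlinarith [ht.1]
    have hann : 0 ≤ a := Real.sin_nonneg_of_nonneg_of_le_pi hta
      (by linarith [Real.pi_pos])
    have hbnn : 0 ≤ b := Real.sin_nonneg_of_nonneg_of_le_pi htb
      (by linarith [Real.pi_pos])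
    -- not both zero: a > 0 or b > 0
    have hab : 0 < a ∨ 0 < b := by
      rcases lt_or_eq_of_le ht.1 with h0 | h0
      · left
        exact Real.sin_pos_of_pos_of_lt_pi (mul_pos h0 hHpos)
          (lt_of_le_of_lt htaH (by linarith [Real.pi_pos]))
      · right
        have : b = Real.sin H := by rw [hb, ← h0]; ring_nf
        rw [this]; exact hsinHpos
    constructor
    · filter_upwards [hR₀pos, hR₁pos] with x h0 h1
      rw [hRt]
      apply div_pos _ hsinHpos
      rcases hab with h | h
      · have := mul_pos h h1
        nlinarith [mul_nonneg hbnn h0.le]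
      · have := mul_pos h h0
        nlinarith [mul_nonneg hann h1.le]
    · -- trig identity: a² + b² + 2abc = sin²H
      have key : a^2 + b^2 + 2*a*b*c = Real.sin H ^ 2 := by
        have hbeq : b = Real.sin H * Real.cos (t*H) - Real.cos H * Real.sin (t*H) := by
          rw [hb]
          have : (1-t)*H = H - t*H := by ring
          rw [this, Real.sin_sub]
        rw [← hcosH, ha, hbeq]
        nlinarith [Real.sin_sq_add_cos_sq (t*H), Real.sin_sq_add_cos_sq H]
      have hexp : (fun x => (Rt t x)^2)
          = fun x => (a^2 * (R₁ x)^2 + 2*a*b * (R₀ x * R₁ x) + b^2 * (R₀ x)^2)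
              / Real.sin H ^ 2 := by
        funext x
        rw [hRt]
        rw [div_pow]
        congr 1
        ring
      rw [hexp]
      rw [integral_div]
      have hs1 : Integrable (fun x => a^2 * (R₁ x)^2 + 2*a*b * (R₀ x * R₁ x)) μ :=
        (hi1.const_mul _).add (hi01.const_mul _)
      rw [integral_add hs1 (hi0.const_mul _),
        integral_add (hi1.const_mul _) (hi01.const_mul _),
        integral_const_mul, integral_const_mul, integral_const_mul,
        hR₀norm, hR₁norm, ← hc]
      rw [div_eq_one_iff_eq (by positivity)]
      linarith [key]
  · intro x
    rw [hRt]
    simp only [zero_mul, Real.sin_zero, sub_zero, one_mul]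
    field_simp
    ring
  · intro x
    rw [hRt]
    simp only [one_mul, sub_self, zero_mul, Real.sin_zero]
    field_simp
    ring
end

section
/- Assume ∇Φ − u is weakly divergence-free with respect to μ, that there exists a differentiable g : ℝⁿ → ℝ with ∇g(x) = (∇²Ψ(x)) u(x) for all x, and that the functions x ↦ ⟨∇Φ(x) − u(x), (∇²Ψ(x))∇Φ(x)⟩, x ↦ ⟨∇Φ(x) − u(x), (∇²Ψ(x))u(x)⟩ and x ↦ ⟨∇Φ(x) − u(x), (∇²Ψ(x))(∇Φ(x) − u(x))⟩ are μ-integrable. Then ∫ ⟨∇Φ(x) − u(x), (∇²Ψ(x))∇Φ(x)⟩ dμ(x) ≥ 0. -/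
open MeasureTheory
open scoped RealInnerProductSpace

lemma monotone_hasDerivAt_nonneg {φ : ℝ → ℝ} {c a : ℝ}
    (hm : Monotone φ) (hd : HasDerivAt φ c a) : 0 ≤ c := by
  have h := hasDerivAt_iff_tendsto_slope.mp hd
  refine ge_of_tendsto h ?_
  filter_upwards [self_mem_nhdsWithin] with t (ht : t ≠ a)
  rcases lt_or_gt_of_ne ht with h1 | h1
  · have : φ t ≤ φ a := hm h1.le
    have : φ t - φ a ≤ 0 := by linarith
    have h2 : t - a < 0 := by linarith
    simp only [slope_def_field]
    exact div_nonneg_of_nonpos this h2.le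
  · have h0 : φ a ≤ φ t := hm h1.le
    have h2 : 0 < t - a := by linarith
    have : 0 ≤ φ t - φ a := by linarith
    simp only [slope_def_field]
    exact div_nonneg this h2.le

lemma hessian_psd {E : Type*} [NormedAddCommGroup E] [InnerProductSpace ℝ E] [CompleteSpace E]
    {Ψ : E → ℝ} (hΨ : ContDiff ℝ 2 Ψ) (hconv : ConvexOn ℝ Set.univ Ψ)
    (x v : E) : 0 ≤ ⟪v, fderiv ℝ (gradient Ψ) x v⟫ := by
  have hgdiff : Differentiable ℝ (gradient Ψ) := by
    have h1 : ContDiff ℝ 1 (fderiv ℝ Ψ) := hΨ.fderiv_right le_rfl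
    exact fun y => ((InnerProductSpace.toDual ℝ E).symm.differentiable.differentiableAt).comp y
      (h1.differentiable one_ne_zero y)
  have hdiff : Differentiable ℝ Ψ := hΨ.differentiable two_ne_zero
  set f : ℝ → ℝ := fun t => Ψ (x + t • v) with hf
  set f' : ℝ → ℝ := fun t => ⟪v, gradient Ψ (x + t • v)⟫ with hf'
  have hL : ∀ t : ℝ, HasDerivAt (fun s : ℝ => x + s • v) v t := fun t => by
    simpa using ((hasDerivAt_id t).smul_const v).const_add x
  have hfd : ∀ t, HasDerivAt f (f' t) t := by
    intro t
    have h1 : HasFDerivAt Ψ (fderiv ℝ Ψ (x + t • v)) (x + t • v) :=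
      (hdiff _).hasFDerivAt
    have h2 := h1.comp_hasDerivAt t (hL t)
    have h3 : fderiv ℝ Ψ (x + t • v) v = ⟪v, gradient Ψ (x + t • v)⟫ := by
      have h4 := (hdiff (x + t • v)).hasGradientAt.hasFDerivAt
      rw [h4.fderiv, real_inner_comm]; rfl
    rwa [h3] at h2
  have hfconv : ConvexOn ℝ Set.univ f := by
    have := hconv.comp_affineMap (AffineMap.lineMap x (x + v) : ℝ →ᵃ[ℝ] E)
    have heq : (fun t : ℝ => Ψ (x + t • v)) = Ψ ∘ (AffineMap.lineMap x (x + v)) := by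
      funext t; simp [AffineMap.lineMap_apply, add_comm]
    rw [hf, heq]
    simpa using this
  have hmono : Monotone f' := by
    have := hfconv.monotoneOn_deriv (fun y _ => (hfd y).differentiableAt)
    have hde : deriv f = f' := funext fun t => (hfd t).deriv
    rw [hde] at this
    exact monotoneOn_univ.mp this
  have hf'd : HasDerivAt f' ⟪v, fderiv ℝ (gradient Ψ) x v⟫ 0 := by
    have h1 : HasFDerivAt (gradient Ψ) (fderiv ℝ (gradient Ψ) x) x :=
      (hgdiff x).hasFDerivAt
    have h1' : HasFDerivAt (gradient Ψ) (fderiv ℝ (gradient Ψ) x) (x + (0:ℝ) • v) := by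
      simpa using h1
    have h2 := h1'.comp_hasDerivAt 0 (hL 0)
    have h3 := (innerSL ℝ v).hasFDerivAt.comp_hasDerivAt 0 h2
    simp at h3
    exact h3
  exact monotone_hasDerivAt_nonneg hmono hf'd

/-- If `∇Φ − u` is weakly divergence-free w.r.t. `μ`, `Ψ` is `C²` and convex, and
`∇²Ψ · u` is a gradient field, then `∫ ⟨∇Φ − u, ∇²Ψ ∇Φ⟩ dμ ≥ 0`. -/
theorem integral_inner_hessian_gradPhi_nonneg
    {n : ℕ} (μ : Measure (EuclideanSpace ℝ (Fin n)))
    (Ψ Φ : EuclideanSpace ℝ (Fin n) → ℝ)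
    (u : EuclideanSpace ℝ (Fin n) → EuclideanSpace ℝ (Fin n))
    (hΨ : ContDiff ℝ 2 Ψ)
    (hconv : ConvexOn ℝ Set.univ Ψ)
    (hΦ : Differentiable ℝ Φ)
    (hdivfree : ∀ h : EuclideanSpace ℝ (Fin n) → ℝ, Differentiable ℝ h →
      Integrable (fun x => ⟪gradient h x, gradient Φ x - u x⟫) μ →
      ∫ x, ⟪gradient h x, gradient Φ x - u x⟫ ∂μ = 0)
    (g : EuclideanSpace ℝ (Fin n) → ℝ) (hg : Differentiable ℝ g)
    (hgrad : ∀ x, gradient g x = fderiv ℝ (gradient Ψ) x (u x))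
    (hint1 : Integrable
      (fun x => ⟪gradient Φ x - u x, fderiv ℝ (gradient Ψ) x (gradient Φ x)⟫) μ)
    (hint2 : Integrable
      (fun x => ⟪gradient Φ x - u x, fderiv ℝ (gradient Ψ) x (u x)⟫) μ)
    (hint3 : Integrable
      (fun x => ⟪gradient Φ x - u x, fderiv ℝ (gradient Ψ) x (gradient Φ x - u x)⟫) μ) :
    0 ≤ ∫ x, ⟪gradient Φ x - u x, fderiv ℝ (gradient Ψ) x (gradient Φ x)⟫ ∂μ := by

  classical
  have key : ∀ x, ⟪gradient Φ x - u x, fderiv ℝ (gradient Ψ) x (gradient Φ x)⟫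
      = ⟪gradient Φ x - u x, fderiv ℝ (gradient Ψ) x (gradient Φ x - u x)⟫
        + ⟪gradient Φ x - u x, fderiv ℝ (gradient Ψ) x (u x)⟫ := by
    intro x
    rw [← inner_add_right, ← map_add, sub_add_cancel]
  rw [integral_congr_ae (Filter.Eventually.of_forall key), integral_add hint3 hint2]
  have h3 : 0 ≤ ∫ x, ⟪gradient Φ x - u x, fderiv ℝ (gradient Ψ) x (gradient Φ x - u x)⟫ ∂μ :=
    integral_nonneg fun x => hessian_psd hΨ hconv x _
  have h2 : ∫ x, ⟪gradient Φ x - u x, fderiv ℝ (gradient Ψ) x (u x)⟫ ∂μ = 0 := by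
    have heq : ∀ x, ⟪gradient Φ x - u x, fderiv ℝ (gradient Ψ) x (u x)⟫
        = ⟪gradient g x, gradient Φ x - u x⟫ := fun x => by
      rw [hgrad x, real_inner_comm]
    have hi : Integrable (fun x => ⟪gradient g x, gradient Φ x - u x⟫) μ := by
      have := hint2
      simpa [heq] using this
    calc ∫ x, ⟪gradient Φ x - u x, fderiv ℝ (gradient Ψ) x (u x)⟫ ∂μ
        = ∫ x, ⟪gradient g x, gradient Φ x - u x⟫ ∂μ :=
          integral_congr_ae (Filter.Eventually.of_forall heq)
      _ = 0 := hdivfree g hg hi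
  linarith
end

section
/- Suppose Φ solves the W-AIG Hamilton–Jacobi equation and X : ℝ → ℝⁿ is differentiable with X'(t) = ∇_xΦ(t, X(t)). Then V(t) := ∇_xΦ(t, X(t)) is differentiable and V'(t) = −α(t) V(t) − ∇_xΨ(t, X(t)). That is, a particle following the flow of ∇_xΦ satisfies the Lagrangian system dX/dt = V, dV/dt = −α_t V − ∇(δE/δρ_t)(X). -/
open scoped RealInnerProductSpace

set_option maxHeartbeats 1000000 in
/-- Particle formulation of the W-AIG flow: if `Φ` solves the Hamilton–Jacobi equation
`∂ₜΦ + αΦ + ½‖∇Φ‖² + Ψ = 0` and `X' = ∇ₓΦ(t, X)`, then `V := ∇ₓΦ(t, X)` satisfies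
`V' = −αV − ∇ₓΨ(t, X)`. -/
theorem particle_W_AIG_flow
    {n : ℕ} (Φ Ψ : ℝ → EuclideanSpace ℝ (Fin n) → ℝ) (α : ℝ → ℝ)
    (hΦ : ContDiff ℝ 2 (fun p : ℝ × EuclideanSpace ℝ (Fin n) => Φ p.1 p.2))
    (hΨ : ∀ t, Differentiable ℝ (Ψ t))
    (hHJ : ∀ t x, deriv (fun s => Φ s x) t + α t * Φ t x
      + (1/2) * ‖gradient (Φ t) x‖^2 + Ψ t x = 0)
    (X : ℝ → EuclideanSpace ℝ (Fin n))
    (hX : ∀ t, HasDerivAt X (gradient (Φ t) (X t)) t)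
    (V : ℝ → EuclideanSpace ℝ (Fin n))
    (hV : ∀ t, V t = gradient (Φ t) (X t)) :
    ∀ t, HasDerivAt V (-(α t) • V t - gradient (Ψ t) (X t)) t := by
  set f : ℝ × EuclideanSpace ℝ (Fin n) → ℝ := fun p => Φ p.1 p.2 with hf
  have hfd : Differentiable ℝ f := hΦ.differentiable two_ne_zero
  have hDf : ContDiff ℝ 1 (fderiv ℝ f) := hΦ.fderiv_right (le_refl 2)
  set f'' : ℝ × EuclideanSpace ℝ (Fin n) →
      ((ℝ × EuclideanSpace ℝ (Fin n)) →L[ℝ] ((ℝ × EuclideanSpace ℝ (Fin n)) →L[ℝ] ℝ)) :=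
    fderiv ℝ (fderiv ℝ f) with hf''
  have hDf' : ∀ p, HasFDerivAt (fderiv ℝ f) (f'' p) p :=
    fun p => (hDf.differentiable one_ne_zero p).hasFDerivAt
  have symm : ∀ p v w, f'' p v w = f'' p w v :=
    fun p => second_derivative_symmetric (fun y => (hfd y).hasFDerivAt) (hDf' p)
  set φ : ((ℝ × EuclideanSpace ℝ (Fin n)) →L[ℝ] ℝ) →L[ℝ] EuclideanSpace ℝ (Fin n) :=
    ((InnerProductSpace.toDual ℝ (EuclideanSpace ℝ (Fin n))).symm.toContinuousLinearEquiv.toContinuousLinearMap).comp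
      ((ContinuousLinearMap.compL ℝ (EuclideanSpace ℝ (Fin n)) (ℝ × EuclideanSpace ℝ (Fin n)) ℝ).flip
        (ContinuousLinearMap.inr ℝ ℝ (EuclideanSpace ℝ (Fin n)))) with hφ
  have inner_φ : ∀ (L : (ℝ × EuclideanSpace ℝ (Fin n)) →L[ℝ] ℝ) (w : EuclideanSpace ℝ (Fin n)),
      ⟪φ L, w⟫ = L (0, w) := by
    intro L w
    simp [hφ, InnerProductSpace.toDual_symm_apply]
  set g : ℝ × EuclideanSpace ℝ (Fin n) → EuclideanSpace ℝ (Fin n) :=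
    fun p => φ (fderiv ℝ f p) with hg
  have factx : ∀ s x, HasFDerivAt (Φ s) ((fderiv ℝ f (s, x)).comp
      (ContinuousLinearMap.inr ℝ ℝ (EuclideanSpace ℝ (Fin n)))) x := by
    intro s x
    exact (hfd (s, x)).hasFDerivAt.comp x (hasFDerivAt_prodMk_right s x)
  have grad_eq : ∀ s x, gradient (Φ s) x = g (s, x) := by
    intro s x
    rw [gradient, (factx s x).fderiv]
    simp [hg, hφ]
  have hgp : ∀ p, HasFDerivAt g (φ.comp (f'' p)) p :=
    fun p => φ.hasFDerivAt.comp p (hDf' p)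
  have ht : ∀ s x, HasDerivAt (fun s => Φ s x) (fderiv ℝ f (s, x) (1, 0)) s := by
    intro s x
    exact (hfd (s, x)).hasFDerivAt.comp_hasDerivAt s
      ((hasDerivAt_id s).prodMk (hasDerivAt_const s x))
  have H : ∀ s x, fderiv ℝ f (s, x) (1, 0) + α s * f (s, x)
      + (1/2) * ⟪g (s, x), g (s, x)⟫ + Ψ s x = 0 := by
    intro s x
    have h0 := hHJ s x
    rw [(ht s x).deriv] at h0
    rw [real_inner_self_eq_norm_sq, ← grad_eq]
    exact h0
  intro t
  set x := X t with hx
  set u : EuclideanSpace ℝ (Fin n) := g (t, x) with hu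
  have hXu : HasDerivAt X u t := by rw [hu, ← grad_eq]; exact hX t
  have hgx : HasFDerivAt (fun y => g (t, y)) ((φ.comp (f'' (t, x))).comp
      (ContinuousLinearMap.inr ℝ ℝ (EuclideanSpace ℝ (Fin n)))) x :=
    (hgp (t, x)).comp x (hasFDerivAt_prodMk_right t x)
  have A1 : HasFDerivAt (fun y => fderiv ℝ f (t, y) (1, 0))
      ((ContinuousLinearMap.apply ℝ ℝ ((1 : ℝ), (0 : EuclideanSpace ℝ (Fin n)))).comp
        ((f'' (t, x)).comp (ContinuousLinearMap.inr ℝ ℝ (EuclideanSpace ℝ (Fin n))))) x :=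
    (ContinuousLinearMap.apply ℝ ℝ ((1 : ℝ), (0 : EuclideanSpace ℝ (Fin n)))).hasFDerivAt.comp x
      ((hDf' (t, x)).comp x (hasFDerivAt_prodMk_right t x))
  have A2 : HasFDerivAt (fun y => α t * f (t, y))
      (α t • ((fderiv ℝ f (t, x)).comp (ContinuousLinearMap.inr ℝ ℝ (EuclideanSpace ℝ (Fin n))))) x :=
    (factx t x).const_mul (α t)
  have A3 : HasFDerivAt (fun y => (1/2 : ℝ) * ⟪g (t, y), g (t, y)⟫)
      ((1/2 : ℝ) • ((fderivInnerCLM ℝ (g (t, x), g (t, x))).comp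
        (((φ.comp (f'' (t, x))).comp (ContinuousLinearMap.inr ℝ ℝ (EuclideanSpace ℝ (Fin n)))).prod
         ((φ.comp (f'' (t, x))).comp (ContinuousLinearMap.inr ℝ ℝ (EuclideanSpace ℝ (Fin n))))))) x :=
    (hgx.inner ℝ hgx).const_mul (1/2 : ℝ)
  have A4 : HasFDerivAt (Ψ t) (fderiv ℝ (Ψ t) x) x := (hΨ t x).hasFDerivAt
  have hzero : (fun y : EuclideanSpace ℝ (Fin n) => fderiv ℝ f (t, y) (1, 0) + α t * f (t, y)
      + (1/2 : ℝ) * ⟪g (t, y), g (t, y)⟫ + Ψ t y) = fun _ => (0 : ℝ) :=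
    funext fun y => H t y
  have hsum : HasFDerivAt (fun y : EuclideanSpace ℝ (Fin n) => fderiv ℝ f (t, y) (1, 0) + α t * f (t, y)
      + (1/2 : ℝ) * ⟪g (t, y), g (t, y)⟫ + Ψ t y) _ x := ((A1.add A2).add A3).add A4
  rw [hzero] at hsum
  have hD0 := hsum.unique (hasFDerivAt_const (0 : ℝ) x)
  have key : ∀ w : EuclideanSpace ℝ (Fin n),
      f'' (t, x) (0, w) (1, 0) + α t * fderiv ℝ f (t, x) (0, w)
      + f'' (t, x) (0, w) (0, u) + fderiv ℝ (Ψ t) x w = 0 := by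
    intro w
    have hth := congrFun (congrArg (fun (L : EuclideanSpace ℝ (Fin n) →L[ℝ] ℝ) => (L : EuclideanSpace ℝ (Fin n) → ℝ)) hD0) w
    simp only [ContinuousLinearMap.add_apply, ContinuousLinearMap.coe_comp',
      Function.comp_apply, ContinuousLinearMap.smul_apply, ContinuousLinearMap.prod_apply,
      ContinuousLinearMap.apply_apply, ContinuousLinearMap.inr_apply,
      fderivInnerCLM_apply, ContinuousLinearMap.zero_apply, smul_eq_mul] at hth
    rw [inner_φ] at hth
    rw [← hu] at hth
    rw [inner_φ] at hth
    have c : fderiv ℝ f (t, x) (0, φ (f'' (t, x) (0, w))) = f'' (t, x) (0, w) (0, u) := by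
      rw [← inner_φ (fderiv ℝ f (t, x)), real_inner_comm, inner_φ]
    rw [c] at hth
    linarith
  have hVg : V = fun s => g (s, X s) := funext fun s => (hV s).trans (grad_eq s (X s))
  have hVd : HasDerivAt V (φ (f'' (t, x) (1, u))) t := by
    rw [hVg]
    have h2 := (hgp (t, x)).comp_hasDerivAt t ((hasDerivAt_id t).prodMk hXu)
    exact h2
  have hVt : V t = u := by rw [hV t, grad_eq]
  have final : φ (f'' (t, x) (1, u)) = -(α t) • V t - gradient (Ψ t) (X t) := by
    apply ext_inner_right ℝ
    intro w
    rw [inner_φ]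
    have split : ((1 : ℝ), u) = ((1 : ℝ), (0 : EuclideanSpace ℝ (Fin n))) + ((0 : ℝ), u) := by simp
    rw [split, map_add, ContinuousLinearMap.add_apply]
    rw [symm (t, x) (1, 0) (0, w), symm (t, x) (0, u) (0, w)]
    have hk := key w
    have hinner : fderiv ℝ f (t, x) (0, w) = ⟪u, w⟫ := by
      rw [hu, hg]
      exact (inner_φ _ w).symm
    have hΨinner : fderiv ℝ (Ψ t) x w = ⟪gradient (Ψ t) x, w⟫ := by
      rw [gradient]
      exact (InnerProductSpace.toDual_symm_apply).symm
    rw [hinner, hΨinner] at hk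
    rw [hVt, ← hx]
    rw [inner_sub_left, inner_smul_left]
    simp only [conj_trivial, neg_mul] at hk ⊢
    linarith
  exact final ▸ hVd
end

section
/- Suppose Φ solves the KW-AIG Hamilton–Jacobi equation and X : ℝ → ℝⁿ is differentiable with X'(t) = C(t) ∇_xΦ(t, X(t)). Then V(t) := ∇_xΦ(t, X(t)) is differentiable and V'(t) = −α(t) V(t) − B(t)(X(t) − m(t)) − ∇_xΨ(t, X(t)). That is, a particle following the Kalman–Wasserstein flow satisfies dX/dt = C(t)V, dV/dt = −α_t V − B(t)(X − m(t)) − ∇(δE/δρ_t)(X). -/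
open scoped RealInnerProductSpace

open InnerProductSpace in
theorem aux_KW_AIG {E : Type*} [NormedAddCommGroup E] [InnerProductSpace ℝ E] [CompleteSpace E]
    (Φ Ψ : ℝ → E → ℝ) (α : ℝ → ℝ) (m : ℝ → E) (C B : ℝ → E →L[ℝ] E)
    (hCsymm : ∀ t v w, ⟪C t v, w⟫ = ⟪v, C t w⟫)
    (hBsymm : ∀ t v w, ⟪B t v, w⟫ = ⟪v, B t w⟫)
    (hΦ : ContDiff ℝ 2 (fun p : ℝ × E => Φ p.1 p.2))
    (hΨ : ∀ t, Differentiable ℝ (Ψ t))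
    (hHJ : ∀ t x, deriv (fun s => Φ s x) t + α t * Φ t x
      + (1/2) * (⟪x - m t, B t (x - m t)⟫ + ⟪gradient (Φ t) x, C t (gradient (Φ t) x)⟫)
      + Ψ t x = 0)
    (X : ℝ → E) (hX : ∀ t, HasDerivAt X (C t (gradient (Φ t) (X t))) t)
    (V : ℝ → E) (hV : ∀ t, V t = gradient (Φ t) (X t)) :
    ∀ t, HasDerivAt V (-(α t) • V t - B t (X t - m t) - gradient (Ψ t) (X t)) t := by
  intro t
  set F : ℝ × E → ℝ := fun p => Φ p.1 p.2 with hFdef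
  have hFd : Differentiable ℝ F := hΦ.differentiable (by norm_num)
  set A : ℝ × E → (ℝ × E) →L[ℝ] ℝ := fderiv ℝ F with hAdef
  have hA1 : ContDiff ℝ 1 A := hΦ.fderiv_right (by norm_num)
  have hAd : Differentiable ℝ A := hA1.differentiable one_ne_zero
  set M : ((ℝ × E) →L[ℝ] ℝ) →L[ℝ] E :=
    ((toDual ℝ E).symm.toContinuousLinearEquiv :
        (E →L[ℝ] ℝ) ≃L[ℝ] E).toContinuousLinearMap ∘L
      (ContinuousLinearMap.compL ℝ E (ℝ × E) ℝ).flip (ContinuousLinearMap.inr ℝ ℝ E) with hMdef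
  have hMinner : ∀ (ℓ : (ℝ × E) →L[ℝ] ℝ) (v : E), ⟪M ℓ, v⟫ = ℓ (0, v) := by
    intro ℓ v
    simp [hMdef, toDual_symm_apply]
  -- the x-slice derivative
  have hslice : ∀ (t : ℝ) (x : E),
      HasFDerivAt (Φ t) ((A (t, x)).comp
        (((0 : E →L[ℝ] ℝ)).prod (ContinuousLinearMap.id ℝ E))) x := by
    intro t x
    exact (hFd (t, x)).hasFDerivAt.comp x ((hasFDerivAt_const t x).prodMk (hasFDerivAt_id x))
  have hgradΦ : ∀ (t : ℝ) (x : E) (v : E), ⟪gradient (Φ t) x, v⟫ = A (t, x) (0, v) := by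
    intro t x v
    have h := (hslice t x).fderiv
    show ⟪(toDual ℝ E).symm (fderiv ℝ (Φ t) x), v⟫ = _
    rw [toDual_symm_apply, h]
    simp
  have hgradM : ∀ (t : ℝ) (x : E), gradient (Φ t) x = M (A (t, x)) := by
    intro t x
    refine ext_inner_right ℝ fun v => ?_
    rw [hgradΦ, hMinner]
  have hDt : ∀ (t : ℝ) (x : E), deriv (fun s => Φ s x) t = A (t, x) (1, 0) := by
    intro t x
    have h : HasDerivAt (fun s => F (s, x)) (A (t, x) (1, 0)) t := by
      simpa [Function.comp_def] using (hFd (t, x)).hasFDerivAt.comp_hasDerivAt t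
        ((hasDerivAt_id t).prodMk (hasDerivAt_const t x))
    exact h.deriv
  -- second derivative at p
  set p : ℝ × E := (t, X t) with hpdef
  set A'' : (ℝ × E) →L[ℝ] (ℝ × E) →L[ℝ] ℝ := fderiv ℝ A p with hA''def
  have hsymm : ∀ u v, A'' u v = A'' v u := fun u v =>
    second_derivative_symmetric (fun y => (hFd y).hasFDerivAt) (hAd p).hasFDerivAt u v
  have hG2 : HasFDerivAt (fun q => M (A q)) (M ∘L A'') p := by
    have h := @HasFDerivAt.comp ℝ _ (ℝ × E) _ _ ((ℝ × E) →L[ℝ] ℝ) _ _ E _ _ A (fderiv ℝ A p) p M M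
      (M.hasFDerivAt (x := A p)) (hAd p).hasFDerivAt
    exact h
  set Vt : E := V t with hVtdef
  have hXt : HasDerivAt X (C t Vt) t := by rw [hVtdef, hV]; exact hX t
  have hVd : HasDerivAt (fun s => M (A (s, X s))) (M (A'' (1, C t Vt))) t := by
    simpa [Function.comp_def] using hG2.comp_hasDerivAt t ((hasDerivAt_id t).prodMk hXt)
  -- directional HJ identity
  have key2 : ∀ w : E, A'' (0, w) (1, 0) + α t * ⟪Vt, w⟫
      + (1/2) * ((⟪X t - m t, B t w⟫ + ⟪w, B t (X t - m t)⟫)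
        + (⟪Vt, C t (M (A'' (0, w)))⟫ + ⟪M (A'' (0, w)), C t Vt⟫))
      + ⟪gradient (Ψ t) (X t), w⟫ = 0 := by
    intro w
    set ℓ : ℝ → E := fun s => X t + s • w with hℓdef
    have hℓ : HasDerivAt ℓ w 0 := by
      simpa [hℓdef] using ((hasDerivAt_id (0:ℝ)).smul_const w).const_add (X t)
    have hℓ0 : ℓ 0 = X t := by simp [hℓdef]
    have hc2 : HasDerivAt (fun s => (t, ℓ s)) ((0:ℝ), w) 0 :=
      (hasDerivAt_const 0 t).prodMk hℓ
    have hp0 : (t, ℓ 0) = p := by rw [hℓ0]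
    have T1 : HasDerivAt (fun s => A (t, ℓ s) (1, 0)) (A'' ((0:ℝ), w) (1, 0)) 0 := by
      have hN : HasFDerivAt (fun q => A q ((1:ℝ), (0:E)))
          ((ContinuousLinearMap.apply ℝ ℝ ((1:ℝ), (0:E))) ∘L A'') (t, ℓ 0) := by
        rw [hp0]
        exact (ContinuousLinearMap.apply ℝ ℝ ((1:ℝ), (0:E))).hasFDerivAt.comp p
          (hAd p).hasFDerivAt
      simpa [Function.comp_def] using hN.comp_hasDerivAt 0 hc2
    have T2 : HasDerivAt (fun s => α t * F (t, ℓ s)) (α t * A p (0, w)) 0 := by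
      have h : HasDerivAt (fun s => F (t, ℓ s)) (A p (0, w)) 0 := by
        have hF' : HasFDerivAt F (A p) (t, ℓ 0) := by rw [hp0]; exact (hFd p).hasFDerivAt
        simpa [Function.comp_def] using hF'.comp_hasDerivAt 0 hc2
      exact h.const_mul (α t)
    have hf3 : HasDerivAt (fun s => ℓ s - m t) w 0 := hℓ.sub_const (m t)
    have hg3 : HasDerivAt (fun s => B t (ℓ s - m t)) (B t w) 0 :=
      (B t).hasFDerivAt.comp_hasDerivAt 0 hf3
    have T3 : HasDerivAt (fun s => ⟪ℓ s - m t, B t (ℓ s - m t)⟫)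
        (⟪X t - m t, B t w⟫ + ⟪w, B t (X t - m t)⟫) 0 := by
      have := hf3.inner ℝ hg3
      rw [hℓ0] at this
      exact this
    have hf4 : HasDerivAt (fun s => M (A (t, ℓ s))) (M (A'' ((0:ℝ), w))) 0 := by
      have hG2' : HasFDerivAt (fun q => M (A q)) (M ∘L A'') (t, ℓ 0) := by
        rw [hp0]; exact hG2
      simpa [Function.comp_def] using hG2'.comp_hasDerivAt 0 hc2
    have hg4 : HasDerivAt (fun s => C t (M (A (t, ℓ s)))) (C t (M (A'' ((0:ℝ), w)))) 0 :=
      (C t).hasFDerivAt.comp_hasDerivAt 0 hf4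
    have T4 : HasDerivAt (fun s => ⟪M (A (t, ℓ s)), C t (M (A (t, ℓ s)))⟫)
        (⟪Vt, C t (M (A'' ((0:ℝ), w)))⟫ + ⟪M (A'' ((0:ℝ), w)), C t Vt⟫) 0 := by
      have h := hf4.inner ℝ hg4
      rw [hℓ0] at h
      have hMAp : M (A p) = Vt := by rw [hVtdef, hV, hgradM]
      rw [← hpdef, hMAp] at h
      exact h
    have T5 : HasDerivAt (fun s => Ψ t (ℓ s)) ⟪gradient (Ψ t) (X t), w⟫ 0 := by
      have h := ((hΨ t) (ℓ 0)).hasFDerivAt.comp_hasDerivAt 0 hℓ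
      rw [hℓ0] at h
      have : ⟪gradient (Ψ t) (X t), w⟫ = fderiv ℝ (Ψ t) (X t) w := by
        show ⟪(toDual ℝ E).symm (fderiv ℝ (Ψ t) (X t)), w⟫ = _
        rw [toDual_symm_apply]
      rw [this]
      exact h
    have hsum := (((T1.add T2).add ((T3.add T4).const_mul (1/2))).add T5)
    have hzero : (fun s => A (t, ℓ s) (1, 0) + α t * F (t, ℓ s)
        + (1/2) * ((⟪ℓ s - m t, B t (ℓ s - m t)⟫) + ⟪M (A (t, ℓ s)), C t (M (A (t, ℓ s)))⟫)
        + Ψ t (ℓ s)) = fun _ => (0:ℝ) := by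
      funext s
      have h := hHJ t (ℓ s)
      rw [hDt t (ℓ s), hgradM t (ℓ s)] at h
      exact h
    change HasDerivAt (fun s => A (t, ℓ s) (1, 0) + α t * F (t, ℓ s)
        + (1/2) * ((⟪ℓ s - m t, B t (ℓ s - m t)⟫) + ⟪M (A (t, ℓ s)), C t (M (A (t, ℓ s)))⟫)
        + Ψ t (ℓ s)) _ 0 at hsum
    rw [hzero] at hsum
    have := (hasDerivAt_const (0:ℝ) (0:ℝ)).unique hsum
    have hAp : A p (0, w) = ⟪Vt, w⟫ := by
      rw [hVtdef, hV]
      exact (hgradΦ t (X t) w).symm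
    rw [← hAp]
    exact this.symm
  -- assemble
  have hVfun : V = fun s => M (A (s, X s)) := funext fun s => by rw [hV, hgradM]
  have key : M (A'' (1, C t Vt)) = -(α t) • Vt - B t (X t - m t) - gradient (Ψ t) (X t) := by
    refine ext_inner_right ℝ fun w => ?_
    have h1 : ⟪M (A'' (1, C t Vt)), w⟫ = A'' (0, w) (1, (0:E)) + A'' (0, w) (0, C t Vt) := by
      rw [hMinner, hsymm]
      have : ((1:ℝ), C t Vt) = ((1:ℝ), (0:E)) + ((0:ℝ), C t Vt) := by simp
      rw [this, map_add]
    have h2 : A'' (0, w) (0, C t Vt) = ⟪M (A'' (0, w)), C t Vt⟫ := (hMinner _ _).symm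
    have h3 := key2 w
    have h4 : ⟪X t - m t, B t w⟫ = ⟪B t (X t - m t), w⟫ := (hBsymm t (X t - m t) w).symm
    have h5 : ⟪w, B t (X t - m t)⟫ = ⟪B t (X t - m t), w⟫ := real_inner_comm _ _
    have h6 : ⟪Vt, C t (M (A'' (0, w)))⟫ = ⟪M (A'' (0, w)), C t Vt⟫ := by
      rw [← hCsymm t Vt (M (A'' (0, w)))]
      exact real_inner_comm _ _
    rw [h4, h5, h6] at h3
    rw [h1, h2]
    rw [inner_sub_left, inner_sub_left, real_inner_smul_left]
    linarith
  rw [hVfun]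
  exact key ▸ hVd

/-- Particle formulation of the KW-AIG flow: if `Φ` solves the Kalman–Wasserstein
Hamilton–Jacobi equation and `X' = C(t)∇ₓΦ(t, X)`, then `V := ∇ₓΦ(t, X)` satisfies
`V' = −αV − B(t)(X − m(t)) − ∇ₓΨ(t, X)`. -/
theorem particle_KW_AIG_flow
    {n : ℕ} (Φ Ψ : ℝ → EuclideanSpace ℝ (Fin n) → ℝ) (α : ℝ → ℝ)
    (m : ℝ → EuclideanSpace ℝ (Fin n))
    (C B : ℝ → EuclideanSpace ℝ (Fin n) →L[ℝ] EuclideanSpace ℝ (Fin n))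
    (hCsymm : ∀ t v w, ⟪C t v, w⟫ = ⟪v, C t w⟫)
    (hBsymm : ∀ t v w, ⟪B t v, w⟫ = ⟪v, B t w⟫)
    (hΦ : ContDiff ℝ 2 (fun p : ℝ × EuclideanSpace ℝ (Fin n) => Φ p.1 p.2))
    (hΨ : ∀ t, Differentiable ℝ (Ψ t))
    (hHJ : ∀ t x, deriv (fun s => Φ s x) t + α t * Φ t x
      + (1/2) * (⟪x - m t, B t (x - m t)⟫ + ⟪gradient (Φ t) x, C t (gradient (Φ t) x)⟫)
      + Ψ t x = 0)
    (X : ℝ → EuclideanSpace ℝ (Fin n))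
    (hX : ∀ t, HasDerivAt X (C t (gradient (Φ t) (X t))) t)
    (V : ℝ → EuclideanSpace ℝ (Fin n))
    (hV : ∀ t, V t = gradient (Φ t) (X t)) :
    ∀ t, HasDerivAt V (-(α t) • V t - B t (X t - m t) - gradient (Ψ t) (X t)) t :=
  aux_KW_AIG Φ Ψ α m C B hCsymm hBsymm hΦ hΨ hHJ X hX V hV
end
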